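/- arXiv:2203.02705 — 11 statements merged into one kernel-verified Lean document; each statement's English description precedes it below -/
import Mathlib

section
/- Let N = 8n with n ≥ 1, let A = {1,...,4n} and B = {4n+1,...,8n}, and let y be the permutation of {1,...,N} swapping i and 4n+i for each 1 ≤ i ≤ 4n. If z is any permutation of {1,...,N} that maps A into A, then every cycle in the disjoint cycle decomposition of y·z has even length. -/
/-- Let `N = 8n` (`n ≥ 1`), `A = {i : i < 4n}` (0-indexed), and let `y` be the
permutation swapping `i` and `4n + i` for each `i < 4n`. If `z` maps `A` into `A`, then every
cycle in the disjoint cycle decomposition of `y * z` has even length (in particular `y * z`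
has no fixed points, so every point lies in an even-length cycle). -/
theorem stmt0 (n : ℕ) (hn : 1 ≤ n) (y z : Equiv.Perm (Fin (8 * n)))
    (hy : ∀ i : Fin (8 * n),
      ((y i : Fin (8 * n)) : ℕ) = if (i : ℕ) < 4 * n then (i : ℕ) + 4 * n else (i : ℕ) - 4 * n)
    (hz : ∀ i : Fin (8 * n), (i : ℕ) < 4 * n → ((z i : Fin (8 * n)) : ℕ) < 4 * n) :
    (∀ c ∈ (y * z).cycleType, Even c) ∧ ∀ a : Fin (8 * n), (y * z) a ≠ a := by
  set σ := y * z with hσ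
  -- z maps B into B
  have hzB : ∀ i : Fin (8 * n), ¬ ((i : ℕ) < 4 * n) → ¬ ((z i : ℕ) < 4 * n) := by
    intro i hi hcontra
    -- z restricted to A is a bijection of A
    set A : Finset (Fin (8 * n)) := Finset.univ.filter (fun j => (j : ℕ) < 4 * n) with hA
    have himg : A.image z = A := by
      apply Finset.eq_of_subset_of_card_le
      · intro x hx
        simp only [hA, Finset.mem_image, Finset.mem_filter, Finset.mem_univ, true_and] at hx ⊢
        obtain ⟨j, hj, rfl⟩ := hx
        exact hz j hj
      · rw [Finset.card_image_of_injective _ z.injective]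
    have : z i ∈ A.image z := by
      rw [himg]; simp [hA, hcontra]
    obtain ⟨j, hj, hji⟩ := Finset.mem_image.mp this
    have : j = i := z.injective hji
    subst this
    simp [hA] at hj
    exact hi hj
  -- parity function
  set f : Fin (8 * n) → ZMod 2 := fun a => if (a : ℕ) < 4 * n then 0 else 1 with hf
  have hstep : ∀ a, f (σ a) = f a + 1 := by
    intro a
    by_cases ha : (a : ℕ) < 4 * n
    · have h1 : ((z a : Fin (8 * n)) : ℕ) < 4 * n := hz a ha
      have h2 : ((σ a : Fin (8 * n)) : ℕ) = (z a : ℕ) + 4 * n := by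
        simp only [hσ, Equiv.Perm.mul_apply]
        rw [hy (z a), if_pos h1]
      simp only [hf, if_pos ha, h2]
      rw [if_neg (by omega)]
      ring
    · have h1 : ¬ ((z a : Fin (8 * n)) : ℕ) < 4 * n := hzB a ha
      have h2 : ((σ a : Fin (8 * n)) : ℕ) = (z a : ℕ) - 4 * n := by
        simp only [hσ, Equiv.Perm.mul_apply]
        rw [hy (z a), if_neg h1]
      have h3 : (z a : ℕ) < 8 * n := (z a).isLt
      simp only [hf, if_neg ha, h2]
      rw [if_pos (by omega)]
      decide
  have hpow : ∀ (k : ℕ) (a : Fin (8 * n)), f ((σ ^ k) a) = f a + k := by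
    intro k
    induction k with
    | zero => simp
    | succ m ih =>
      intro a
      have : σ ^ (m + 1) = σ * σ ^ m := by rw [pow_succ']
      rw [this, Equiv.Perm.mul_apply, hstep, ih]
      push_cast
      ring
  have hkey : ∀ (k : ℕ) (a : Fin (8 * n)), (σ ^ k) a = a → Even k := by
    intro k a hk
    have := hpow k a
    rw [hk] at this
    have h0 : (k : ZMod 2) = 0 := left_eq_add.mp this
    rw [even_iff_two_dvd]
    exact (ZMod.natCast_eq_zero_iff k 2).mp h0
  constructor
  · intro c hc
    rw [Equiv.Perm.cycleType_def, Multiset.mem_map] at hc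
    obtain ⟨c', hc', rfl⟩ := hc
    rw [Finset.mem_val] at hc'
    have hcyc : c'.IsCycle := (Equiv.Perm.mem_cycleFactorsFinset_iff.mp hc').1
    obtain ⟨a, ha, -⟩ := id hcyc
    have hca : c' = σ.cycleOf a := Equiv.Perm.cycle_is_cycleOf (by simpa using ha) hc'
    have hord : orderOf c' = c'.support.card := Equiv.Perm.IsCycle.orderOf hcyc
    have hfix : (σ ^ c'.support.card) a = a := by
      have h1 : (c' ^ c'.support.card) a = a := by
        rw [← hord, pow_orderOf_eq_one]; rfl
      calc (σ ^ c'.support.card) a = ((σ.cycleOf a) ^ c'.support.card) a := by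
            rw [Equiv.Perm.cycleOf_pow_apply_self]
        _ = a := by rw [← hca]; exact h1
    exact hkey _ _ hfix
  · intro a ha
    have := hkey 1 a (by simpa using ha)
    simp at this
end

section
/- Let N = 8n with n ≥ 1, let A = {1,...,4n} and B = {4n+1,...,8n}, and let y be the permutation swapping i and 4n+i for 1 ≤ i ≤ 4n. If z maps A into A, then the order of y·z is even. -/
/-- With `N = 8n` (`n ≥ 1`), `y` the permutation swapping `i` and `4n + i`
for `i < 4n`, and `z` any permutation mapping `A = {i : i < 4n}` into itself,
the order of `y * z` is even. -/
theorem stmt1 (n : ℕ) (hn : 1 ≤ n) (y z : Equiv.Perm (Fin (8 * n)))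
    (hy : ∀ i : Fin (8 * n),
      ((y i : Fin (8 * n)) : ℕ) = if (i : ℕ) < 4 * n then (i : ℕ) + 4 * n else (i : ℕ) - 4 * n)
    (hz : ∀ i : Fin (8 * n), (i : ℕ) < 4 * n → ((z i : Fin (8 * n)) : ℕ) < 4 * n) :
    Even (orderOf (y * z)) := by
  -- z maps B into B, by a counting/injectivity argument
  have hzB : ∀ i : Fin (8 * n), ((z i : Fin (8 * n)) : ℕ) < 4 * n → (i : ℕ) < 4 * n := by
    intro i hi
    set S : Finset (Fin (8 * n)) := Finset.univ.filter (fun j => (j : ℕ) < 4 * n) with hS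
    have hmaps : ∀ a ∈ S, z a ∈ S := by
      intro a ha
      simp only [hS, Finset.mem_filter, Finset.mem_univ, true_and] at ha ⊢
      exact hz a ha
    have hinj : ∀ (a₁ a₂ : Fin (8 * n)), a₁ ∈ S → a₂ ∈ S → z a₁ = z a₂ → a₁ = a₂ := by
      intro a₁ a₂ _ _ h; exact z.injective h
    have hsurj := Finset.surj_on_of_inj_on_of_card_le (fun a _ => z a) hmaps hinj le_rfl
    have hziS : z i ∈ S := by
      simp only [hS, Finset.mem_filter, Finset.mem_univ, true_and]; exact hi
    obtain ⟨a, haS, hae⟩ := hsurj (z i) hziS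
    have : a = i := z.injective hae.symm
    subst this
    simpa only [hS, Finset.mem_filter, Finset.mem_univ, true_and] using haS
  -- y * z swaps the sets A = {i < 4n} and its complement
  have hswap : ∀ i : Fin (8 * n),
      (((y * z) i : Fin (8 * n)) : ℕ) < 4 * n ↔ ¬ ((i : ℕ) < 4 * n) := by
    intro i
    have hcoe : ((y * z) i) = y (z i) := rfl
    rw [hcoe, hy (z i)]
    by_cases h : ((z i : Fin (8 * n)) : ℕ) < 4 * n
    · rw [if_pos h]
      constructor
      · intro hlt; omega
      · intro hni; exact absurd (hzB i h) hni
    · rw [if_neg h]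
      have hlt : ((z i : Fin (8 * n)) : ℕ) < 8 * n := (z i).isLt
      constructor
      · intro _
        intro hiA
        exact h (hz i hiA)
      · intro _; omega
  -- powers: parity of the exponent determines the side
  have hpow : ∀ m : ℕ, ∀ i : Fin (8 * n),
      ((((y * z) ^ m) i : Fin (8 * n)) : ℕ) < 4 * n ↔ (Even m ↔ (i : ℕ) < 4 * n) := by
    intro m
    induction m with
    | zero => intro i; simp
    | succ k ih =>
      intro i
      have : ((y * z) ^ (k + 1)) i = ((y * z) ^ k) ((y * z) i) := by
        rw [pow_succ]
        rfl
      rw [this, ih ((y * z) i), hswap i, Nat.even_add_one]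
      tauto
  -- conclude
  set m := orderOf (y * z) with hm
  by_contra hodd
  rw [Nat.not_even_iff_odd] at hodd
  have h1 : ((y * z) ^ m) = 1 := pow_orderOf_eq_one (y * z)
  have h0 : (0 : ℕ) < 8 * n := by omega
  have i0 : Fin (8 * n) := ⟨0, h0⟩
  have := hpow m ⟨0, h0⟩
  rw [h1] at this
  simp only [Equiv.Perm.coe_one, id_eq] at this
  have hA : ((⟨0, h0⟩ : Fin (8 * n)) : ℕ) < 4 * n := by simp; omega
  rw [iff_true_right hA] at this
  exact (Nat.not_even_iff_odd.mpr hodd) (this.mp hA)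
end

section
/- Let N = 8n with n ≥ 1, let x = (1 2)(3 4)···(4n−1 4n) and y = (1 4n+1)(2 4n+2)···(4n 8n), both elements of the alternating group A_N. Then every element of the coset y·Z_{A_N}(x), where Z_{A_N}(x) is the centralizer of x in A_N, has even order. -/
/-- With `N = 8n` (`n ≥ 1`), `x = (1 2)(3 4)⋯(4n-1 4n)` and
`y = (1 4n+1)(2 4n+2)⋯(4n 8n)` (0-indexed descriptions below), every element `y * z` of the
coset `y ⬝ Z_{A_N}(x)` of the centralizer of `x` in the alternating group has even order. -/
theorem stmt3 (n : ℕ) (hn : 1 ≤ n) (x y : Equiv.Perm (Fin (8 * n)))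
    (hx : ∀ i : Fin (8 * n), ((x i : Fin (8 * n)) : ℕ) =
      if (i : ℕ) < 4 * n then (if (i : ℕ) % 2 = 0 then (i : ℕ) + 1 else (i : ℕ) - 1)
      else (i : ℕ))
    (hy : ∀ i : Fin (8 * n),
      ((y i : Fin (8 * n)) : ℕ) = if (i : ℕ) < 4 * n then (i : ℕ) + 4 * n else (i : ℕ) - 4 * n) :
    ∀ z : Equiv.Perm (Fin (8 * n)), z ∈ alternatingGroup (Fin (8 * n)) → z * x = x * z →
      Even (orderOf (y * z)) := by
  intro z _hzalt hcomm
  have h8 : 0 < 8 * n := by omega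
  -- x fixes exactly the points ≥ 4n
  have hxfix : ∀ j : Fin (8 * n), 4 * n ≤ (j : ℕ) → x j = j := by
    intro j hj
    apply Fin.ext
    rw [hx]
    simp [Nat.not_lt.mpr hj]
  have hxmove : ∀ j : Fin (8 * n), (j : ℕ) < 4 * n → x j ≠ j := by
    intro j hj hcon
    have h := hx j
    rw [hcon] at h
    split_ifs at h <;> omega
  -- anything commuting with x preserves the upper half
  have key : ∀ g : Equiv.Perm (Fin (8 * n)), g * x = x * g →
      ∀ j : Fin (8 * n), 4 * n ≤ (j : ℕ) → 4 * n ≤ ((g j : Fin (8 * n)) : ℕ) := by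
    intro g hg j hj
    by_contra hlt
    push_neg at hlt
    apply hxmove (g j) hlt
    have hxg : x (g j) = g (x j) := by
      have := congrArg (fun p : Equiv.Perm (Fin (8 * n)) => p j) hg.symm
      simpa [Equiv.Perm.mul_apply] using this
    rw [hxg, hxfix j hj]
  have hc : Commute z x := hcomm
  have hzF : ∀ j : Fin (8 * n), 4 * n ≤ (j : ℕ) → 4 * n ≤ ((z j : Fin (8 * n)) : ℕ) :=
    key z hcomm
  have hzinvF : ∀ j : Fin (8 * n), 4 * n ≤ (j : ℕ) → 4 * n ≤ ((z⁻¹ j : Fin (8 * n)) : ℕ) :=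
    key z⁻¹ hc.inv_left
  have hzS : ∀ j : Fin (8 * n), (j : ℕ) < 4 * n → ((z j : Fin (8 * n)) : ℕ) < 4 * n := by
    intro j hj
    by_contra h
    push_neg at h
    have := hzinvF (z j) h
    rw [Equiv.Perm.inv_def, Equiv.symm_apply_apply] at this
    omega
  -- y*z swaps the two halves
  have hw : ∀ j : Fin (8 * n),
      (((y * z) j : Fin (8 * n)) : ℕ) < 4 * n ↔ ¬ ((j : ℕ) < 4 * n) := by
    intro j
    have h2 := (z j).isLt
    rw [Equiv.Perm.mul_apply, hy (z j)]
    by_cases hj : (j : ℕ) < 4 * n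
    · have := hzS j hj
      split_ifs <;> omega
    · have := hzF j (le_of_not_gt hj)
      split_ifs <;> omega
  let j₀ : Fin (8 * n) := ⟨0, h8⟩
  have hiter : ∀ k : ℕ, ((((y * z) ^ k) j₀ : Fin (8 * n)) : ℕ) < 4 * n ↔ Even k := by
    intro k
    induction k with
    | zero =>
      simp only [pow_zero, Equiv.Perm.one_apply]
      have : (j₀ : ℕ) = 0 := rfl
      simp [this]
      omega
    | succ k ih =>
      rw [pow_succ', Equiv.Perm.mul_apply, hw, ih]
      simp [Nat.even_add_one]
  have hd := hiter (orderOf (y * z))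
  rw [pow_orderOf_eq_one, Equiv.Perm.one_apply] at hd
  have h0 : (j₀ : ℕ) = 0 := rfl
  exact hd.mp (by omega)
end

section
/- Let N = 8n with n ≥ 1, and let x = (1 2)(3 4)···(4n−1 4n), y = (1 4n+1)(2 4n+2)···(4n 8n) in A_N. Then every element of the coset y·Z_{A_N}(x) is a product of disjoint cycles, each of even length; equivalently, every cycle in its cycle decomposition has even length. -/
/-- With `N = 8n` (`n ≥ 1`), `x = (1 2)(3 4)⋯(4n-1 4n)` and
`y = (1 4n+1)(2 4n+2)⋯(4n 8n)`, every element `y * z` of the coset `y ⬝ Z_{A_N}(x)` is a product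
of disjoint cycles each of even length: every cycle in its cycle decomposition has even length
and `y * z` has no fixed points. -/
theorem stmt4 (n : ℕ) (hn : 1 ≤ n) (x y : Equiv.Perm (Fin (8 * n)))
    (hx : ∀ i : Fin (8 * n), ((x i : Fin (8 * n)) : ℕ) =
      if (i : ℕ) < 4 * n then (if (i : ℕ) % 2 = 0 then (i : ℕ) + 1 else (i : ℕ) - 1)
      else (i : ℕ))
    (hy : ∀ i : Fin (8 * n),
      ((y i : Fin (8 * n)) : ℕ) = if (i : ℕ) < 4 * n then (i : ℕ) + 4 * n else (i : ℕ) - 4 * n) :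
    ∀ z : Equiv.Perm (Fin (8 * n)), z ∈ alternatingGroup (Fin (8 * n)) → z * x = x * z →
      (∀ c ∈ (y * z).cycleType, Even c) ∧ ∀ a : Fin (8 * n), (y * z) a ≠ a := by
  intro z _hz hcomm
  -- x fixes exactly the points with value ≥ 4n
  have hsupp : ∀ i : Fin (8 * n), x i = i ↔ ¬ ((i : ℕ) < 4 * n) := by
    intro i
    constructor
    · intro h hi
      have hv := hx i
      rw [h, if_pos hi] at hv
      split_ifs at hv <;> omega
    · intro h
      have := hx i
      rw [if_neg h] at this
      exact Fin.ext this
  -- z preserves the two halves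
  have hzpres : ∀ i : Fin (8 * n), ((z i : ℕ) < 4 * n ↔ (i : ℕ) < 4 * n) := by
    intro i
    have hcz : x (z i) = z (x i) := by
      have := congrArg (fun p => p i) hcomm.symm
      simpa [Equiv.Perm.mul_apply] using this
    constructor
    · intro h
      by_contra hi
      have hxi : x i = i := (hsupp i).mpr hi
      rw [hxi] at hcz
      have : ¬ ((z i : ℕ) < 4 * n) := (hsupp (z i)).mp hcz
      exact this h
    · intro h
      have hxi : x i ≠ i := fun hh => ((hsupp i).mp hh) h
      have : x (z i) ≠ z i := by
        rw [hcz]; intro hh; exact hxi (z.injective hh)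
      by_contra hzi
      exact this ((hsupp (z i)).mpr hzi)
  -- y * z swaps the two halves
  have key : ∀ i : Fin (8 * n), (((y * z) i : ℕ) < 4 * n ↔ ¬ ((i : ℕ) < 4 * n)) := by
    intro i
    have hval : ((y * z) i : ℕ) = if ((z i : ℕ) < 4 * n) then (z i : ℕ) + 4 * n
        else (z i : ℕ) - 4 * n := by
      simpa [Equiv.Perm.mul_apply] using hy (z i)
    by_cases hi : (i : ℕ) < 4 * n
    · have hz4 : (z i : ℕ) < 4 * n := (hzpres i).mpr hi
      rw [if_pos hz4] at hval
      simp only [hi, not_true_eq_false, iff_false, not_lt]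
      omega
    · have hz4 : ¬ ((z i : ℕ) < 4 * n) := fun hh => hi ((hzpres i).mp hh)
      rw [if_neg hz4] at hval
      have hub : (z i : ℕ) < 8 * n := (z i).isLt
      simp only [hi, not_false_eq_true, iff_true]
      omega
  have hnofix : ∀ a : Fin (8 * n), (y * z) a ≠ a := by
    intro a ha
    have := key a
    rw [ha] at this
    tauto
  refine ⟨?_, hnofix⟩
  intro c hc
  rw [Equiv.Perm.mem_cycleType_iff] at hc
  obtain ⟨g, τ, hmul, hdisj, hcyc, hcard⟩ := hc
  -- on the support of g, y*z agrees with g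
  have hagree : ∀ i ∈ g.support, (y * z) i = g i := by
    intro i hi
    have hτ : τ i = i := by
      rcases hdisj i with h | h
      · exact absurd h (Equiv.Perm.mem_support.mp hi)
      · exact h
    rw [hmul]
    simp [Equiv.Perm.mul_apply, hτ]
  have hmaps : ∀ i ∈ g.support, (y * z) i ∈ g.support := by
    intro i hi
    rw [hagree i hi]
    exact Equiv.Perm.apply_mem_support.mpr hi
  -- split the support into the two halves; (y*z) gives a bijection between them
  set S := g.support with hS
  set A := S.filter (fun i : Fin (8 * n) => ((i : ℕ) < 4 * n)) with hA
  set B := S.filter (fun i : Fin (8 * n) => ¬ ((i : ℕ) < 4 * n)) with hB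
  have hcardsum : A.card + B.card = S.card := Finset.card_filter_add_card_filter_not _
  have himg : S.image (y * z) = S := by
    apply Finset.eq_of_subset_of_card_le
    · intro j hj
      obtain ⟨i, hi, rfl⟩ := Finset.mem_image.mp hj
      exact hmaps i hi
    · rw [Finset.card_image_of_injective _ (y * z).injective]
  have hinvS : ∀ j ∈ S, (y * z)⁻¹ j ∈ S := by
    intro j hj
    rw [← himg] at hj
    obtain ⟨i, hi, hij⟩ := Finset.mem_image.mp hj
    rwa [← hij, show (y * z)⁻¹ ((y * z) i) = i from Equiv.symm_apply_apply _ _]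
  have hAB : A.card = B.card := by
    apply Finset.card_bij' (fun i _ => (y * z) i) (fun j _ => (y * z)⁻¹ j)
    · intro i hi
      simp only [hA, Finset.mem_filter] at hi
      simp only [hB, Finset.mem_filter]
      exact ⟨hmaps i hi.1, fun hh => ((key i).mp hh) hi.2⟩
    · intro j hj
      simp only [hB, Finset.mem_filter] at hj
      simp only [hA, Finset.mem_filter]
      refine ⟨hinvS j hj.1, ?_⟩
      have hk := key ((y * z)⁻¹ j)
      rw [show (y * z) ((y * z)⁻¹ j) = j from Equiv.apply_symm_apply _ _] at hk
      by_contra hni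
      exact hj.2 (hk.mpr hni)
    · intro i _; exact Equiv.symm_apply_apply _ _
    · intro j _; exact Equiv.apply_symm_apply _ _
  rw [← hcard, ← hcardsum, hAB]
  exact ⟨B.card, rfl⟩
end

section
/- Let N = 8n with n ≥ 2. Then the coset y·Z_{A_N}(x), with x = (1 2)···(4n−1 4n) and y = (1 4n+1)···(4n 8n), contains no element of odd order; in particular, the conjecture that each coset of the centralizer of an involution in a finite non-abelian simple group contains an odd order element fails for A_{8n}. -/
/-- With `N = 8n` (`n ≥ 2`), `x = (1 2)⋯(4n-1 4n)` and `y = (1 4n+1)⋯(4n 8n)`,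
the coset `y ⬝ Z_{A_N}(x)` contains no element of odd order. -/
theorem stmt5 (n : ℕ) (hn : 2 ≤ n) (x y : Equiv.Perm (Fin (8 * n)))
    (hx : ∀ i : Fin (8 * n), ((x i : Fin (8 * n)) : ℕ) =
      if (i : ℕ) < 4 * n then (if (i : ℕ) % 2 = 0 then (i : ℕ) + 1 else (i : ℕ) - 1)
      else (i : ℕ))
    (hy : ∀ i : Fin (8 * n),
      ((y i : Fin (8 * n)) : ℕ) = if (i : ℕ) < 4 * n then (i : ℕ) + 4 * n else (i : ℕ) - 4 * n) :
    ∀ z : Equiv.Perm (Fin (8 * n)), z ∈ alternatingGroup (Fin (8 * n)) → z * x = x * z →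
      ¬ Odd (orderOf (y * z)) := by
  intro z _hz hcomm hodd
  have h8 : 0 < 8 * n := by omega
  -- fixed points of x are exactly the second half
  have hxfix : ∀ i : Fin (8 * n), x i = i ↔ ¬ ((i : ℕ) < 4 * n) := by
    intro i
    constructor
    · intro h hlt
      have hxi := hx i
      rw [h, if_pos hlt] at hxi
      rcases Nat.even_or_odd (i : ℕ) with he | ho
      · rw [if_pos (Nat.even_iff.mp he)] at hxi; omega
      · rw [Nat.odd_iff] at ho
        rw [if_neg (by omega)] at hxi
        omega
    · intro h
      have hxi := hx i
      rw [if_neg h] at hxi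
      exact Fin.ext hxi
  -- z preserves the first half
  have hz1 : ∀ i : Fin (8 * n), ((z i : ℕ) < 4 * n ↔ (i : ℕ) < 4 * n) := by
    have key : ∀ i : Fin (8 * n), ¬ ((i : ℕ) < 4 * n) → ¬ ((z i : ℕ) < 4 * n) := by
      intro i hi
      have hfix : x i = i := (hxfix i).mpr hi
      have : x (z i) = z i := by
        have := congrArg (fun f : Equiv.Perm (Fin (8 * n)) => f i) hcomm.symm
        simp only [Equiv.Perm.mul_apply] at this
        rw [hfix] at this
        exact this
      exact (hxfix _).mp this
    intro i
    constructor
    · intro hzi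
      by_contra hi
      exact key i hi hzi
    · intro hi
      by_contra hzi
      -- then x (z i) = z i, so z (x i) = z i, so x i = i, contradiction
      have hfix : x (z i) = z i := (hxfix _).mpr hzi
      have : z (x i) = z i := by
        have := congrArg (fun f : Equiv.Perm (Fin (8 * n)) => f i) hcomm
        simp only [Equiv.Perm.mul_apply] at this
        rw [this, hfix]
      have : x i = i := z.injective this
      exact (hxfix i).mp this hi
  set w := y * z with hw
  -- w swaps the two halves
  have hswap : ∀ i : Fin (8 * n), ((w i : ℕ) < 4 * n ↔ ¬ ((i : ℕ) < 4 * n)) := by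
    intro i
    have hwi : w i = y (z i) := rfl
    have hyz := hy (z i)
    have hlt := (z i).isLt
    rw [hwi]
    by_cases hi : (i : ℕ) < 4 * n
    · have hz' : (z i : ℕ) < 4 * n := (hz1 i).mpr hi
      rw [if_pos hz'] at hyz
      constructor
      · intro h; omega
      · intro h; exact absurd hi h
    · have hz' : ¬ (z i : ℕ) < 4 * n := fun h => hi ((hz1 i).mp h)
      rw [if_neg hz'] at hyz
      constructor
      · intro _; exact hi
      · intro _; omega
  -- iterate from 0
  have hpow : ∀ k : ℕ, (((w ^ k) (⟨0, h8⟩ : Fin (8 * n)) : ℕ) < 4 * n ↔ Even k) := by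
    intro k
    induction k with
    | zero => simp; omega
    | succ k ih =>
      have : (w ^ (k + 1)) (⟨0, h8⟩ : Fin (8 * n)) = w ((w ^ k) ⟨0, h8⟩) := by
        rw [pow_succ']; rfl
      rw [this, hswap, Nat.even_add_one]
      tauto
  obtain ⟨m, hm⟩ := hodd
  have hpow1 : (y * z) ^ orderOf (y * z) = 1 := pow_orderOf_eq_one (y * z)
  have h0 : ((w ^ orderOf (y * z)) (⟨0, h8⟩ : Fin (8 * n)) : ℕ) < 4 * n := by
    rw [← hw] at hpow1
    rw [hpow1]
    simp
    omega
  have := (hpow (orderOf (y * z))).mp h0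
  rw [hm, Nat.even_iff] at this
  omega
end

section
/- Let p ≥ 3 be prime and p ≤ n ≤ 2p−1. Let P = ⟨(1 2 ... p)⟩ ≤ A_n and let x be a p-cycle in A_n with x ∉ P. Then the coset xP contains an element that is not a p-cycle. -/
/-- Let `p ≥ 3` be prime and `p ≤ n ≤ 2p - 1`. Let `c` be the standard `p`-cycle
`(1 2 ... p)` (0-indexed: `c i = (i+1) % p` for `i < p`, fixing the rest), `P = ⟨c⟩ ≤ A_n`,
and let `x ∈ A_n` be a `p`-cycle with `x ∉ P`. Then the coset `xP` contains an element that is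
not a `p`-cycle. -/
theorem stmt7 (p n : ℕ) (hp : p.Prime) (hp3 : 3 ≤ p) (h1 : p ≤ n) (h2 : n ≤ 2 * p - 1)
    (c x : Equiv.Perm (Fin n))
    (hc : ∀ i : Fin n,
      ((c i : Fin n) : ℕ) = if (i : ℕ) < p then ((i : ℕ) + 1) % p else (i : ℕ))
    (hx1 : x.IsCycle) (hx2 : x.support.card = p)
    (hxA : x ∈ alternatingGroup (Fin n)) (hxP : x ∉ Subgroup.zpowers c) :
    ∃ τ ∈ Subgroup.zpowers c, ¬ ((x * τ).IsCycle ∧ (x * τ).support.card = p) := by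
  classical
  by_contra hcon
  push_neg at hcon
  have hp0 : 0 < p := by omega
  -- power formula
  have key : ∀ (k : ℕ) (i : Fin n), (i : ℕ) < p →
      (((c ^ k) i : Fin n) : ℕ) = ((i : ℕ) + k) % p := by
    intro k
    induction k with
    | zero => intro i hi; simpa using (Nat.mod_eq_of_lt hi).symm
    | succ k ih =>
      intro i hi
      have h1' : ((c i : Fin n) : ℕ) = ((i : ℕ) + 1) % p := by rw [hc i, if_pos hi]
      have hci : ((c i : Fin n) : ℕ) < p := by rw [h1']; exact Nat.mod_lt _ hp0
      rw [pow_succ, Equiv.Perm.mul_apply, ih (c i) hci, h1', Nat.mod_add_mod]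
      congr 1
      omega
  set C : Finset (Fin n) := c.support with hC
  have hmemC : ∀ i : Fin n, i ∈ C ↔ (i : ℕ) < p := by
    intro i
    rw [hC, Equiv.Perm.mem_support]
    constructor
    · intro h
      by_contra hip
      apply h
      have h' := hc i
      rw [if_neg hip] at h'
      exact Fin.ext h'
    · intro hip
      have h1' : ((c i : Fin n) : ℕ) = ((i : ℕ) + 1) % p := by rw [hc i, if_pos hip]
      intro he
      rw [he] at h1'
      rcases Nat.lt_or_ge ((i : ℕ) + 1) p with h | h
      · rw [Nat.mod_eq_of_lt h] at h1'; omega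
      · have hq : (i : ℕ) + 1 = p := by omega
        rw [hq, Nat.mod_self] at h1'; omega
  have hcardC : C.card = p := by
    have hmap : C = Finset.map ⟨Fin.castLE h1, Fin.castLE_injective h1⟩ Finset.univ := by
      ext i
      simp only [Finset.mem_map, Finset.mem_univ, true_and, hmemC i,
        Function.Embedding.coeFn_mk]
      constructor
      · intro hip; exact ⟨⟨(i : ℕ), hip⟩, rfl⟩
      · rintro ⟨j, rfl⟩; exact j.isLt
    rw [hmap]
    simp
  have horb : ∀ (k : ℕ) (i : Fin n), i ∈ C → (c ^ k) i ∈ C := by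
    intro k i hi
    rw [hmemC] at hi ⊢
    rw [key k i hi]
    exact Nat.mod_lt _ hp0
  have htrans : ∀ i j : Fin n, i ∈ C → j ∈ C → ∃ k < p, (c ^ k) i = j := by
    intro i j hi hj
    rw [hmemC] at hi hj
    refine ⟨(p + (j : ℕ) - (i : ℕ)) % p, Nat.mod_lt _ hp0, ?_⟩
    apply Fin.ext
    rw [key _ i hi, Nat.add_mod_mod]
    have hq : (i : ℕ) + (p + (j : ℕ) - (i : ℕ)) = p + (j : ℕ) := by omega
    rw [hq, Nat.add_mod_left, Nat.mod_eq_of_lt hj]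
  have hinj : ∀ i : Fin n, i ∈ C → ∀ k, k < p → ∀ l, l < p → (c ^ k) i = (c ^ l) i → k = l := by
    intro i hi k hk l hl he
    rw [hmemC] at hi
    have hv := congrArg Fin.val he
    rw [key k i hi, key l i hi] at hv
    have h2' : k % p = l % p := Nat.ModEq.add_left_cancel' (i : ℕ) hv
    rwa [Nat.mod_eq_of_lt hk, Nat.mod_eq_of_lt hl] at h2'
  have hmem : ∀ k : ℕ, (c ^ k : Equiv.Perm (Fin n)) ∈ Subgroup.zpowers c := fun k =>
    ⟨(k : ℤ), by simp⟩
  have hsupp : ∀ k : ℕ, (x * c ^ k).support ⊆ x.support ∪ C := by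
    intro k
    refine (Equiv.Perm.support_mul_le x (c ^ k)).trans ?_
    exact Finset.union_subset_union (le_refl _) (Equiv.Perm.support_pow_le c k)
  have hcard : ∀ k : ℕ, (x * c ^ k).support.card = p := fun k => (hcon _ (hmem k)).2
  have hfix : ∀ (k : ℕ) (i : Fin n), (x * c ^ k) i = i ↔ (c ^ k) i = x⁻¹ i := by
    intro k i
    rw [Equiv.Perm.mul_apply]
    constructor
    · intro h
      conv_rhs => rw [← h]
      rw [Equiv.Perm.inv_def, Equiv.symm_apply_apply]
    · intro h
      rw [h, Equiv.Perm.inv_def, Equiv.apply_symm_apply]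
  by_cases hSC : x.support = C
  · have h0n : 0 < n := by omega
    set i0 : Fin n := ⟨0, h0n⟩ with hi0
    have hi0C : i0 ∈ C := by rw [hmemC]; simpa [hi0] using hp0
    have hi0S : i0 ∈ x.support := by rw [hSC]; exact hi0C
    have hxi : x⁻¹ i0 ∈ C := by
      have h' : x⁻¹ i0 ∈ x⁻¹.support := by
        apply Equiv.Perm.apply_mem_support.mpr
        rw [Equiv.Perm.support_inv]
        exact hi0S
      rw [Equiv.Perm.support_inv, hSC] at h'
      exact h'
    obtain ⟨k, hk, hck⟩ := htrans i0 (x⁻¹ i0) hi0C hxi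
    have hfixk : (x * c ^ k) i0 = i0 := (hfix k i0).mpr hck
    have hsuppk : (x * c ^ k).support = C := by
      apply Finset.eq_of_subset_of_card_le
      · calc (x * c ^ k).support ⊆ x.support ∪ C := hsupp k
          _ = C := by rw [hSC, Finset.union_self]
      · rw [hcard k, hcardC]
    have hmem0 : i0 ∈ (x * c ^ k).support := hsuppk ▸ hi0C
    rw [Equiv.Perm.mem_support] at hmem0
    exact hmem0 hfixk
  · set S := x.support with hS
    set U := S ∪ C with hU
    have hCU : C ⊆ U := Finset.subset_union_right
    have hSU : S ⊆ U := Finset.subset_union_left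
    have hm : p < U.card := by
      by_contra hle
      push_neg at hle
      have hCeq : C = U := Finset.eq_of_subset_of_card_le hCU (by rw [hcardC]; exact hle)
      have hSsub : S ⊆ C := by rw [hCeq]; exact hSU
      exact hSC (Finset.eq_of_subset_of_card_le hSsub (by rw [hcardC, hx2]))
    have hsum1 : ∑ k ∈ Finset.range p, (U \ (x * c ^ k).support).card = p * (U.card - p) := by
      rw [Finset.sum_congr rfl (fun k _ => by rw [Finset.card_sdiff_of_subset (hsupp k), hcard k]),
        Finset.sum_const, Finset.card_range, smul_eq_mul]
    have hfilter : ∀ k : ℕ, U \ (x * c ^ k).support = U.filter (fun i => (x * c ^ k) i = i) := by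
      intro k
      ext i
      rw [Finset.mem_filter]
      simp [Finset.mem_sdiff, Finset.mem_filter, Equiv.Perm.notMem_support]
    have hsum2 : ∑ k ∈ Finset.range p, (U.filter (fun i => (x * c ^ k) i = i)).card
        = ∑ i ∈ U, ((Finset.range p).filter (fun k => (x * c ^ k) i = i)).card := by
      simp_rw [Finset.card_filter]
      rw [Finset.sum_comm]
    have hi_count : ∀ i ∈ U, ((Finset.range p).filter (fun k => (x * c ^ k) i = i)).card
        = if i ∈ C ∧ x⁻¹ i ∈ C then 1 else 0 := by
      intro i hiU
      by_cases hiC : i ∈ C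
      · by_cases hxi : x⁻¹ i ∈ C
        · rw [if_pos ⟨hiC, hxi⟩]
          obtain ⟨k0, hk0, hck0⟩ := htrans i (x⁻¹ i) hiC hxi
          apply le_antisymm
          · apply Finset.card_le_one.mpr
            intro a ha b hb
            simp only [Finset.mem_filter, Finset.mem_range] at ha hb
            exact hinj i hiC a ha.1 b hb.1
              (by rw [(hfix a i).mp ha.2, (hfix b i).mp hb.2])
          · apply Finset.card_pos.mpr
            exact ⟨k0, Finset.mem_filter.mpr
              ⟨Finset.mem_range.mpr hk0, (hfix k0 i).mpr hck0⟩⟩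
        · rw [if_neg (by tauto)]
          apply Finset.card_eq_zero.mpr
          apply Finset.filter_eq_empty_iff.mpr
          intro k _
          rw [hfix]
          intro he
          exact hxi (he ▸ horb k i hiC)
      · rw [if_neg (by tauto)]
        have hiS : i ∈ S := by
          rcases Finset.mem_union.mp hiU with h | h
          · exact h
          · exact absurd h hiC
        apply Finset.card_eq_zero.mpr
        apply Finset.filter_eq_empty_iff.mpr
        intro k _
        rw [hfix]
        have hfixc : (c ^ k) i = i := by
          have hns : i ∉ (c ^ k).support := fun h => hiC (Equiv.Perm.support_pow_le c k h)
          exact Equiv.Perm.notMem_support.mp hns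
        rw [hfixc]
        intro he
        have hxi2 := congrArg x he
        simp only [Equiv.Perm.inv_def, Equiv.apply_symm_apply] at hxi2
        exact (Equiv.Perm.mem_support.mp hiS) hxi2
    have hsum3 : ∑ i ∈ U, ((Finset.range p).filter (fun k => (x * c ^ k) i = i)).card
        = (U.filter (fun i => i ∈ C ∧ x⁻¹ i ∈ C)).card := by
      rw [Finset.card_filter]
      exact Finset.sum_congr rfl hi_count
    have hchain : p * (U.card - p) = (U.filter (fun i => i ∈ C ∧ x⁻¹ i ∈ C)).card := by
      rw [← hsum3, ← hsum2, ← hsum1]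
      exact Finset.sum_congr rfl (fun k _ => by rw [hfilter k])
    have hfle : U.filter (fun i => i ∈ C ∧ x⁻¹ i ∈ C) ⊆ C := fun i hi =>
      (Finset.mem_filter.mp hi).2.1
    have hflecard : (U.filter (fun i => i ∈ C ∧ x⁻¹ i ∈ C)).card ≤ p := by
      rw [← hcardC]; exact Finset.card_le_card hfle
    have hd1 : U.card - p = 1 := by
      have hd : U.card - p ≤ 1 := by
        apply Nat.le_of_mul_le_mul_left _ hp0
        rw [Nat.mul_one]
        rw [hchain]
        exact hflecard
      omega
    have hfeq : U.filter (fun i => i ∈ C ∧ x⁻¹ i ∈ C) = C := by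
      apply Finset.eq_of_subset_of_card_le hfle
      rw [hcardC, ← hchain, hd1, Nat.mul_one]
    have hxinv : ∀ i ∈ C, x⁻¹ i ∈ C := by
      intro i hi
      have h' : i ∈ U.filter (fun i => i ∈ C ∧ x⁻¹ i ∈ C) := by rw [hfeq]; exact hi
      exact (Finset.mem_filter.mp h').2.2
    have hex : ∃ a ∈ S, a ∉ C := by
      by_contra h
      push_neg at h
      exact hSC (Finset.eq_of_subset_of_card_le h (by rw [hcardC, hx2]))
    obtain ⟨a, haS, haC⟩ := hex
    have hxaS : x a ∈ S := Equiv.Perm.apply_mem_support.mpr haS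
    have hxaC : x a ∉ C := by
      intro h
      have h' := hxinv (x a) h
      simp only [Equiv.Perm.inv_def, Equiv.symm_apply_apply] at h'
      exact haC h'
    have hane : a ≠ x a := fun h => (Equiv.Perm.mem_support.mp haS) h.symm
    have hUC : (U \ C).card = 1 := by
      rw [Finset.card_sdiff_of_subset hCU, hcardC]
      omega
    have haUC : a ∈ U \ C := Finset.mem_sdiff.mpr ⟨hSU haS, haC⟩
    have hxaUC : x a ∈ U \ C := Finset.mem_sdiff.mpr ⟨hSU hxaS, hxaC⟩
    exact hane (Finset.card_le_one.mp (le_of_eq hUC) a haUC (x a) hxaUC)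
end

section
/- Let p ≥ 3 be prime, p ≤ n ≤ 2p−1, and let P be any Sylow p-subgroup of A_n. Then no nontrivial coset of P in A_n consists entirely of p-cycles. -/
open Equiv Equiv.Perm Finset

lemma stmt8_key {α : Type*} [Fintype α] [DecidableEq α] (p : ℕ) (hp : p.Prime) (hp3 : 3 ≤ p)
    (hcard : Fintype.card α ≤ 2 * p - 1) (x σ : Equiv.Perm α)
    (hσ : σ.IsCycle) (hσc : σ.support.card = p)
    (hall : ∀ k : ℕ, (x * σ ^ k).IsCycle ∧ (x * σ ^ k).support.card = p) :
    False := by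
  have hx : x.IsCycle ∧ x.support.card = p := by simpa using hall 0
  have hσord : orderOf σ = p := hσ.orderOf.trans hσc
  set A := x.support with hA
  set B := σ.support with hB
  set U := A ∪ B with hU
  set u := U.card with hu
  have hAc : A.card = p := hx.2
  have hup : p ≤ u := hσc ▸ card_le_card subset_union_right
  have huc : u ≤ 2 * p - 1 := le_trans (card_le_univ U) (by simpa using hcard)
  -- supports of x * σ^k are inside U
  have hsupp : ∀ k : ℕ, (x * σ ^ k).support ⊆ U := by
    intro k
    refine (support_mul_le x (σ ^ k)).trans ?_
    exact union_subset_union (le_refl A) (support_pow_le σ k)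
  -- fixed sets
  set F : ℕ → Finset α := fun k => U \ (x * σ ^ k).support with hF
  have hFcard : ∀ k, (F k).card = u - p := by
    intro k
    rw [hF]
    simp only
    rw [card_sdiff_of_subset (hsupp k), (hall k).2]
  set T : Finset α := B.filter (fun b => x⁻¹ b ∈ B) with hT
  have hmemF : ∀ k b, b ∈ F k ↔ b ∈ U ∧ (x * (σ ^ k)) b = b := by
    intro k b
    simp [hF, notMem_support.symm, Equiv.Perm.mem_support, not_not]
  -- each F k ⊆ T
  have hFT : ∀ k, F k ⊆ T := by
    intro k b hb
    rw [hmemF] at hb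
    obtain ⟨hbU, hfix⟩ := hb
    have hbB : b ∈ B := by
      by_contra hbB
      have h1 : (σ ^ k) b = b := by
        have : b ∉ (σ ^ k).support := fun hc => hbB (support_pow_le σ k hc)
        rwa [notMem_support] at this
      have hbA : b ∈ A := (mem_union.mp hbU).resolve_right hbB
      rw [mul_apply, h1] at hfix
      exact (mem_support.mp hbA) hfix
    have h2 : x⁻¹ b = (σ ^ k) b := by
      rw [mul_apply] at hfix
      rw [Equiv.Perm.inv_eq_iff_eq]
      exact hfix.symm
    rw [hT, mem_filter]
    refine ⟨hbB, ?_⟩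
    rw [h2]
    exact pow_apply_mem_support.mpr hbB
  -- T covered by the F k, k < p
  have hTF : T ⊆ (Finset.range p).biUnion F := by
    intro b hb
    rw [hT, mem_filter] at hb
    obtain ⟨hbB, hxbB⟩ := hb
    obtain ⟨i, hi⟩ := hσ.exists_pow_eq (mem_support.mp hbB) (mem_support.mp hxbB)
    refine mem_biUnion.mpr ⟨i % p, mem_range.mpr (Nat.mod_lt _ hp.pos), ?_⟩
    rw [hmemF]
    refine ⟨mem_union_right _ hbB, ?_⟩
    have : (σ ^ (i % p)) b = x⁻¹ b := by
      rw [← hσord, pow_mod_orderOf, hi]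
    rw [mul_apply, this, ← Equiv.Perm.mul_apply, mul_inv_cancel, Equiv.Perm.one_apply]
  -- disjointness
  have hdisj : ∀ k ∈ Finset.range p, ∀ j ∈ Finset.range p, k ≠ j → Disjoint (F k) (F j) := by
    intro k hk j hj hkj
    rw [Finset.disjoint_left]
    intro b hbk hbj
    rw [hmemF] at hbk hbj
    have hσk : (σ ^ k) b = (σ ^ j) b := by
      have := hbk.2.trans hbj.2.symm
      rw [mul_apply, mul_apply] at this
      exact x.injective this
    wlog hlt : k < j generalizing k j
    · exact this j hj k hk hkj.symm hbj hbk hσk.symm (by omega)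
    have hbB : b ∈ B := by
      rcases mem_union.mp hbk.1 with h | h
      · by_contra hbB
        have h1 : (σ ^ k) b = b := by
          have : b ∉ (σ ^ k).support := fun hc => hbB (support_pow_le σ k hc)
          rwa [notMem_support] at this
        rw [mul_apply, h1] at hbk
        exact (mem_support.mp h) hbk.2
      · exact h
    have h2 : (σ ^ (j - k)) b = b := by
      have : (σ ^ k) ((σ ^ (j - k)) b) = (σ ^ k) b := by
        rw [← Equiv.Perm.mul_apply, ← pow_add, Nat.add_sub_cancel' (le_of_lt hlt), hσk]
      exact (σ ^ k).injective this
    have hjk : j - k < p := by rw [mem_range] at hj; omega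
    have hcop : Nat.Coprime (j - k) (orderOf σ) := by
      rw [hσord]
      exact ((hp.coprime_iff_not_dvd).mpr
        (Nat.not_dvd_of_pos_of_lt (by omega) hjk)).symm
    have : b ∈ (σ ^ (j - k)).support := by
      rw [support_pow_coprime hcop]; exact hbB
    exact (mem_support.mp this) h2
  -- T equals the disjoint union
  have hTeq : T = (Finset.range p).biUnion F :=
    le_antisymm hTF (Finset.biUnion_subset.mpr fun k _ => hFT k)
  have hTcard : T.card = p * (u - p) := by
    rw [hTeq, Finset.card_biUnion hdisj]
    simp [hFcard, mul_comm]
  have hTle : T.card ≤ p := hσc ▸ card_le_card (filter_subset _ _)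
  -- lower bound via inclusion-exclusion
  have hTint : T = B ∩ B.image x := by
    ext b
    simp only [hT, mem_filter, mem_inter, Finset.mem_image]
    constructor
    · rintro ⟨hbB, hxb⟩
      exact ⟨hbB, x⁻¹ b, hxb, by simp⟩
    · rintro ⟨hbB, c, hcB, rfl⟩
      exact ⟨hbB, by simpa using hcB⟩
  have hxBU : B.image x ⊆ U := by
    intro b hb
    obtain ⟨c, hcB, rfl⟩ := Finset.mem_image.mp hb
    by_cases h : x c = c
    · rw [h]; exact mem_union_right _ hcB
    · exact mem_union_left _ (apply_mem_support.mpr (mem_support.mpr h))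
  have hlow : 2 * p ≤ u + T.card := by
    have h1 := Finset.card_union_add_card_inter B (B.image x)
    have h2 : (B ∪ B.image x).card ≤ u :=
      card_le_card (union_subset subset_union_right hxBU)
    have h3 : (B.image x).card = p := by
      rw [Finset.card_image_of_injective _ x.injective, hσc]
    rw [← hTint] at h1
    omega
  -- arithmetic: u = p + 1 and T = B
  have hd : u - p <= 1 := by nlinarith [hTcard, hTle]
  have hu1 : u = p + 1 := by
    by_contra hne
    have hup2 : u = p := by omega
    have h0 : T.card = 0 := by rw [hTcard, hup2, Nat.sub_self, mul_zero]
    rw [h0] at hlow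
    omega
  have hTp : T.card = p := by
    rw [hTcard, hu1]
    have h1 : p + 1 - p = 1 := by omega
    rw [h1, mul_one]
  have hTB : T = B := by
    apply eq_of_subset_of_card_le (filter_subset _ _)
    rw [hTp, hσc]
  -- B is invariant under x
  have hxBinv : ∀ b ∈ B, x b ∈ B := by
    intro b hb
    have himg : B.image ⇑x⁻¹ ⊆ B := by
      intro c hc
      obtain ⟨d, hdB, rfl⟩ := Finset.mem_image.mp hc
      have : d ∈ T := hTB.symm ▸ hdB
      exact (mem_filter.mp this).2
    have heq : B.image ⇑x⁻¹ = B :=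
      eq_of_subset_of_card_le himg
        (le_of_eq (Finset.card_image_of_injective _ (x⁻¹ : Perm α).injective).symm)
    have : b ∈ B.image ⇑x⁻¹ := heq.symm ▸ hb
    obtain ⟨c, hcB, hcb⟩ := Finset.mem_image.mp this
    have hxb : x b = c := by rw [← hcb]; simp
    rwa [hxb]
  have hxpow : ∀ (m : ℕ), ∀ b ∈ B, (x ^ m) b ∈ B := by
    intro m
    induction m with
    | zero => intro b hb; simpa using hb
    | succ m ih =>
      intro b hb
      rw [pow_succ', mul_apply]
      exact hxBinv _ (ih b hb)
  -- find a ∈ A ∩ B and a' ∈ A \ B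
  have hUU : A ∪ B = U := rfl
  have hABcard : (A ∩ B).card = p - 1 := by
    have h5 := Finset.card_union_add_card_inter A B
    rw [hUU, ← hu, hAc, hσc, hu1] at h5
    omega
  have hAB : (A ∩ B).Nonempty := by
    rw [← Finset.card_pos, hABcard]; omega
  obtain ⟨a, ha⟩ := hAB
  have hAnotB : (A \ B).Nonempty := by
    rw [← Finset.card_pos]
    have h6 := Finset.card_sdiff_add_card_inter A B
    omega
  obtain ⟨a', ha'⟩ := hAnotB
  rw [mem_sdiff] at ha'
  rw [mem_inter] at ha
  obtain ⟨i, hi⟩ := hx.1.exists_pow_eq (mem_support.mp ha.1) (mem_support.mp ha'.1)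
  exact ha'.2 (hi ▸ hxpow i a ha.2)

/-- Let `p ≥ 3` be prime, `p ≤ n ≤ 2p - 1`, and let `P` be any Sylow `p`-subgroup
of `A_n`. Then no nontrivial coset `xP` (`x ∉ P`) consists entirely of `p`-cycles. -/
theorem stmt8 (p n : ℕ) (hp : p.Prime) (hp3 : 3 ≤ p) (h1 : p ≤ n) (h2 : n ≤ 2 * p - 1)
    (P : Sylow p (alternatingGroup (Fin n)))
    (x : alternatingGroup (Fin n)) (hx : x ∉ P) :
    ∃ τ ∈ (P : Subgroup (alternatingGroup (Fin n))),
      ¬ (((x * τ : alternatingGroup (Fin n)) : Equiv.Perm (Fin n)).IsCycle ∧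
        ((x * τ : alternatingGroup (Fin n)) : Equiv.Perm (Fin n)).support.card = p) := by
  by_contra hcon
  push_neg at hcon
  haveI : Fact p.Prime := ⟨hp⟩
  haveI hnt : Nontrivial (Fin n) := by
    have : 2 ≤ n := by omega
    exact Fin.nontrivial_iff_two_le.mpr this
  have hcardA : 2 * Fintype.card (alternatingGroup (Fin n)) = Nat.factorial n := by
    rw [two_mul_card_alternatingGroup, Fintype.card_perm, Fintype.card_fin]
  have hpdvd : p ∣ Fintype.card (alternatingGroup (Fin n)) := by
    have hd : p ∣ Nat.factorial n := Nat.dvd_factorial hp.pos h1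
    rw [← hcardA] at hd
    rcases (Nat.Prime.dvd_mul hp).mp hd with h | h
    · exact absurd (Nat.le_of_dvd (by norm_num) h) (by omega)
    · exact h
  haveI : Fintype (P : Subgroup (alternatingGroup (Fin n))) := Fintype.ofFinite _
  have hPcard : p ∣ Fintype.card (P : Subgroup (alternatingGroup (Fin n))) := by
    have hmul := Sylow.card_eq_multiplicity P
    rw [Nat.card_eq_fintype_card, Nat.card_eq_fintype_card] at hmul
    rw [hmul]
    exact dvd_pow_self p (hp.factorization_pos_of_dvd Fintype.card_ne_zero hpdvd).ne'
  obtain ⟨g, hg⟩ :=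
    exists_prime_orderOf_dvd_card (G := (P : Subgroup (alternatingGroup (Fin n)))) p hPcard
  set σ : alternatingGroup (Fin n) := (g : alternatingGroup (Fin n)) with hσdef
  have hσP : σ ∈ (P : Subgroup (alternatingGroup (Fin n))) := g.2
  have hσord : orderOf σ = p := (Subgroup.orderOf_coe g).trans hg
  have hord : orderOf (σ : Equiv.Perm (Fin n)) = p :=
    (Subgroup.orderOf_coe σ).trans hσord
  have hlt : (σ : Equiv.Perm (Fin n)).support.card < 2 * orderOf (σ : Equiv.Perm (Fin n)) := by
    rw [hord]
    calc (σ : Equiv.Perm (Fin n)).support.card ≤ n := by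
          simpa using Finset.card_le_univ (σ : Equiv.Perm (Fin n)).support
      _ < 2 * p := by omega
  have hcyc : (σ : Equiv.Perm (Fin n)).IsCycle :=
    Equiv.Perm.isCycle_of_prime_order (hord ▸ hp) hlt
  have hsc : (σ : Equiv.Perm (Fin n)).support.card = p := hcyc.orderOf.symm.trans hord
  refine stmt8_key p hp hp3 (by simpa using h2) (x : Equiv.Perm (Fin n))
    (σ : Equiv.Perm (Fin n)) hcyc hsc ?_
  intro k
  have hk := hcon (σ ^ k) (pow_mem hσP k)
  have hcoe : ((x * σ ^ k : alternatingGroup (Fin n)) : Equiv.Perm (Fin n)) =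
      (x : Equiv.Perm (Fin n)) * (σ : Equiv.Perm (Fin n)) ^ k := by
    push_cast
    rfl
  rwa [hcoe] at hk
end

section
/- Let p ≥ 3 be prime and 2p ≤ n ≤ 3p−1. Let P = ⟨(1 2 ... p), (p+1 p+2 ... 2p)⟩ ≤ A_n, and let x be a p-cycle with x ∉ P. Then the coset xP contains an element whose order is not p. -/
open Equiv Equiv.Perm Finset

private lemma stmt9_dvd_card_support {m p : ℕ} (hp : p.Prime) {g : Equiv.Perm (Fin m)}
    (h : orderOf g = p) : p ∣ g.support.card := by
  rw [← Equiv.Perm.sum_cycleType]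
  refine Multiset.dvd_sum ?_
  intro l hl
  have h2 : 2 ≤ l := Equiv.Perm.two_le_of_mem_cycleType hl
  have hdvd : l ∣ p := by
    rw [← h, ← Equiv.Perm.lcm_cycleType]
    exact Multiset.dvd_lcm hl
  rcases hp.eq_one_or_self_of_dvd l hdvd with h1 | h1
  · omega
  · exact dvd_of_eq h1.symm

section Template

variable {m p o : ℕ} {c : Equiv.Perm (Fin m)}

private lemma stmt9_pow_fix
    (hc : ∀ j : Fin m, ((c j : Fin m) : ℕ) =
      if o ≤ (j : ℕ) ∧ (j : ℕ) < o + p then o + (((j : ℕ) - o + 1) % p) else (j : ℕ))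
    {j : Fin m} (hj : ¬(o ≤ (j : ℕ) ∧ (j : ℕ) < o + p)) (k : ℕ) : (c ^ k) j = j := by
  have hfix : c j = j := by
    apply Fin.ext
    rw [hc j, if_neg hj]
  induction k with
  | zero => simp
  | succ t ih =>
    rw [pow_succ, Equiv.Perm.mul_apply, hfix, ih]

private lemma stmt9_pow_in (hp : 0 < p)
    (hc : ∀ j : Fin m, ((c j : Fin m) : ℕ) =
      if o ≤ (j : ℕ) ∧ (j : ℕ) < o + p then o + (((j : ℕ) - o + 1) % p) else (j : ℕ))
    (k : ℕ) {j : Fin m} (hj : o ≤ (j : ℕ) ∧ (j : ℕ) < o + p) :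
    (((c ^ k) j : Fin m) : ℕ) = o + (((j : ℕ) - o + k) % p) := by
  induction k with
  | zero =>
    simp only [pow_zero, Equiv.Perm.one_apply, Nat.add_zero]
    rw [Nat.mod_eq_of_lt (by omega)]
    omega
  | succ t ih =>
    rw [pow_succ', Equiv.Perm.mul_apply]
    have hin : o ≤ (((c ^ t) j : Fin m) : ℕ) ∧ (((c ^ t) j : Fin m) : ℕ) < o + p := by
      rw [ih]
      have := Nat.mod_lt ((j : ℕ) - o + t) hp
      omega
    rw [hc, if_pos hin, ih, Nat.add_sub_cancel_left]
    congr 1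
    rw [Nat.mod_add_mod]
    congr 1

private lemma stmt9_k_unique (hp : 0 < p)
    (hc : ∀ j : Fin m, ((c j : Fin m) : ℕ) =
      if o ≤ (j : ℕ) ∧ (j : ℕ) < o + p then o + (((j : ℕ) - o + 1) % p) else (j : ℕ))
    {j : Fin m} (hj : o ≤ (j : ℕ) ∧ (j : ℕ) < o + p) {k k' : ℕ} (hk : k < p) (hk' : k' < p)
    (h : (c ^ k) j = (c ^ k') j) : k = k' := by
  have h1 := stmt9_pow_in hp hc k hj
  have h2 := stmt9_pow_in hp hc k' hj
  have h3 : (((c ^ k) j : Fin m) : ℕ) = (((c ^ k') j : Fin m) : ℕ) := by rw [h]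
  rw [h1, h2] at h3
  have h4 : ((j : ℕ) - o + k) % p = ((j : ℕ) - o + k') % p := by omega
  have h5 : k % p = k' % p := Nat.ModEq.add_left_cancel' ((j : ℕ) - o) h4
  rwa [Nat.mod_eq_of_lt hk, Nat.mod_eq_of_lt hk'] at h5

private lemma stmt9_kappa (hp : 0 < p)
    (hc : ∀ j : Fin m, ((c j : Fin m) : ℕ) =
      if o ≤ (j : ℕ) ∧ (j : ℕ) < o + p then o + (((j : ℕ) - o + 1) % p) else (j : ℕ))
    {i j : Fin m} (hi : o ≤ (i : ℕ) ∧ (i : ℕ) < o + p)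
    (hj : o ≤ (j : ℕ) ∧ (j : ℕ) < o + p) :
    (c ^ ((((i : ℕ) - o) + (p - ((j : ℕ) - o))) % p)) j = i := by
  apply Fin.ext
  rw [stmt9_pow_in hp hc _ hj]
  have hb : (i : ℕ) - o < p := by omega
  have h5 : ((j : ℕ) - o + (((i : ℕ) - o) + (p - ((j : ℕ) - o))) % p) % p
      = ((j : ℕ) - o + (((i : ℕ) - o) + (p - ((j : ℕ) - o)))) % p :=
    Nat.ModEq.add_left _ (Nat.mod_modEq _ p)
  rw [h5]
  have h6 : (j : ℕ) - o + (((i : ℕ) - o) + (p - ((j : ℕ) - o))) = ((i : ℕ) - o) + p := by omega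
  rw [h6, Nat.add_mod_right, Nat.mod_eq_of_lt hb]
  omega

private lemma stmt9_card_I (hop : o + p ≤ m) :
    (Finset.univ.filter (fun j : Fin m => o ≤ (j : ℕ) ∧ (j : ℕ) < o + p)).card = p := by
  have he : (Finset.univ.filter (fun j : Fin m => o ≤ (j : ℕ) ∧ (j : ℕ) < o + p))
      = (Finset.Ico o (o + p)).attachFin (fun y hy => by
          rw [Finset.mem_Ico] at hy; omega) := by
    ext j
    simp [Finset.mem_attachFin, Finset.mem_Ico]
  rw [he, Finset.card_attachFin, Nat.card_Ico]
  omega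

private lemma stmt9_lemA (hp : p.Prime) (hop : o + p ≤ m)
    (hc : ∀ j : Fin m, ((c j : Fin m) : ℕ) =
      if o ≤ (j : ℕ) ∧ (j : ℕ) < o + p then o + (((j : ℕ) - o + 1) % p) else (j : ℕ))
    {x : Equiv.Perm (Fin m)}
    (hS : ∀ j ∈ x.support, o ≤ (j : ℕ) ∧ (j : ℕ) < o + p)
    (hSne : x.support.Nonempty) :
    ∃ k : ℕ, orderOf (x * c ^ k) ≠ p := by
  have hp0 : 0 < p := hp.pos
  obtain ⟨i₀, hi₀⟩ := hSne
  have hi₀I := hS i₀ hi₀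
  have hxi₀ : x i₀ ∈ x.support := Equiv.Perm.apply_mem_support.mpr hi₀
  have hxi₀I := hS _ hxi₀
  refine ⟨((((i₀ : ℕ) - o) + (p - (((x i₀ : Fin m) : ℕ) - o))) % p), ?_⟩
  set k := ((((i₀ : ℕ) - o) + (p - (((x i₀ : Fin m) : ℕ) - o))) % p) with hk
  intro hord
  have hfix : (x * c ^ k) (x i₀) = x i₀ := by
    rw [Equiv.Perm.mul_apply, stmt9_kappa hp0 hc hi₀I hxi₀I]
  have hsub : (x * c ^ k).support ⊆
      (Finset.univ.filter (fun j : Fin m => o ≤ (j : ℕ) ∧ (j : ℕ) < o + p)).erase (x i₀) := by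
    intro j hj
    rw [Equiv.Perm.mem_support] at hj
    rw [Finset.mem_erase, Finset.mem_filter]
    constructor
    · intro heq
      rw [heq] at hj
      exact hj hfix
    · refine ⟨Finset.mem_univ _, ?_⟩
      by_contra hnot
      apply hj
      rw [Equiv.Perm.mul_apply, stmt9_pow_fix hc hnot]
      have hjs : j ∉ x.support := fun hin => hnot (hS j hin)
      exact Equiv.Perm.notMem_support.mp hjs
  have hcard : (x * c ^ k).support.card ≤ p - 1 := by
    have h1 := Finset.card_le_card hsub
    have hmemI : x i₀ ∈ Finset.univ.filter (fun j : Fin m => o ≤ (j : ℕ) ∧ (j : ℕ) < o + p) :=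
      Finset.mem_filter.mpr ⟨Finset.mem_univ _, hxi₀I⟩
    rwa [Finset.card_erase_of_mem hmemI, stmt9_card_I hop] at h1
  have hdvd := stmt9_dvd_card_support hp hord
  have h0 : (x * c ^ k).support.card = 0 := by
    rcases Nat.eq_zero_or_pos (x * c ^ k).support.card with h | h
    · exact h
    · have := Nat.le_of_dvd h hdvd
      omega
  have hone : (x * c ^ k) = 1 := by
    rw [← Equiv.Perm.support_eq_empty_iff]
    exact Finset.card_eq_zero.mp h0
  rw [hone, orderOf_one] at hord
  exact hp.ne_one hord.symm

private lemma stmt9_lemB (hp : p.Prime) (hop : o + p ≤ m)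
    (hc : ∀ j : Fin m, ((c j : Fin m) : ℕ) =
      if o ≤ (j : ℕ) ∧ (j : ℕ) < o + p then o + (((j : ℕ) - o + 1) % p) else (j : ℕ))
    {x : Equiv.Perm (Fin m)} (hx1 : x.IsCycle) (hx2 : x.support.card = p)
    (hne : ∃ j ∈ x.support, o ≤ (j : ℕ) ∧ (j : ℕ) < o + p)
    (hnsub : ∃ j ∈ x.support, ¬(o ≤ (j : ℕ) ∧ (j : ℕ) < o + p)) :
    ∃ k : ℕ, orderOf (x * c ^ k) ≠ p := by
  have hp0 : 0 < p := hp.pos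
  obtain ⟨j₀, hj₀S, hj₀I⟩ := hne
  obtain ⟨j₁, hj₁S, hj₁I⟩ := hnsub
  -- there is a point of the support inside the interval mapped outside it
  have key : ∃ i, i ∈ x.support ∧ (o ≤ (i : ℕ) ∧ (i : ℕ) < o + p) ∧
      ¬(o ≤ ((x i : Fin m) : ℕ) ∧ ((x i : Fin m) : ℕ) < o + p) := by
    by_contra hcon
    push_neg at hcon
    have hstep : ∀ t : ℕ, (x ^ t) j₀ ∈ x.support ∧
        (o ≤ (((x ^ t) j₀ : Fin m) : ℕ) ∧ (((x ^ t) j₀ : Fin m) : ℕ) < o + p) := by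
      intro t
      induction t with
      | zero =>
        simp only [pow_zero, Equiv.Perm.one_apply]
        exact ⟨hj₀S, hj₀I⟩
      | succ t ih =>
        rw [pow_succ', Equiv.Perm.mul_apply]
        exact ⟨Equiv.Perm.apply_mem_support.mpr ih.1, hcon _ ih.1 ih.2⟩
    obtain ⟨t, ht⟩ := hx1.exists_pow_eq (Equiv.Perm.mem_support.mp hj₀S)
      (Equiv.Perm.mem_support.mp hj₁S)
    have h4 := (hstep t).2
    rw [ht] at h4
    exact hj₁I h4
  obtain ⟨i₀, hi₀S, hi₀I, hi₀X⟩ := key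
  classical
  set I : Finset (Fin m) := Finset.univ.filter (fun j : Fin m => o ≤ (j : ℕ) ∧ (j : ℕ) < o + p)
    with hIdef
  set D : Finset (Fin m) :=
    I.filter (fun i => o ≤ ((x i : Fin m) : ℕ) ∧ ((x i : Fin m) : ℕ) < o + p) with hDdef
  have hi₀I' : i₀ ∈ I := Finset.mem_filter.mpr ⟨Finset.mem_univ _, hi₀I⟩
  have hDsub : D ⊆ I.erase i₀ := by
    intro i hi
    rw [hDdef, Finset.mem_filter] at hi
    rw [Finset.mem_erase]
    refine ⟨?_, hi.1⟩
    rintro rfl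
    exact hi₀X hi.2
  have hIcard : I.card = p := stmt9_card_I hop
  have hDcard : D.card ≤ p - 1 := by
    have h5 := Finset.card_le_card hDsub
    rwa [Finset.card_erase_of_mem hi₀I', hIcard] at h5
  set K : Finset ℕ :=
    D.image (fun i : Fin m => ((((i : ℕ) - o) + (p - (((x i : Fin m) : ℕ) - o))) % p)) with hKdef
  have hex : ∃ k ∈ Finset.range p, k ∉ K := by
    by_contra hcc
    push_neg at hcc
    have h6 := Finset.card_le_card (fun k hk => hcc k hk)
    rw [Finset.card_range] at h6
    have h7 := Finset.card_image_le (s := D)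
      (f := fun i : Fin m => ((((i : ℕ) - o) + (p - (((x i : Fin m) : ℕ) - o))) % p))
    rw [← hKdef] at h7
    omega
  obtain ⟨k, hkr, hkK⟩ := hex
  have hkp : k < p := Finset.mem_range.mp hkr
  refine ⟨k, ?_⟩
  intro hord
  have hsupp : (x * c ^ k).support = I ∪ x.support := by
    ext j
    rw [Equiv.Perm.mem_support, Finset.mem_union]
    constructor
    · intro hj
      by_contra hnn
      push_neg at hnn
      have hjI : ¬(o ≤ (j : ℕ) ∧ (j : ℕ) < o + p) := by
        intro h
        exact hnn.1 (Finset.mem_filter.mpr ⟨Finset.mem_univ _, h⟩)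
      apply hj
      rw [Equiv.Perm.mul_apply, stmt9_pow_fix hc hjI]
      exact Equiv.Perm.notMem_support.mp hnn.2
    · intro hj
      rcases Classical.em (o ≤ (j : ℕ) ∧ (j : ℕ) < o + p) with hjI | hjI
      · intro heq
        rw [Equiv.Perm.mul_apply] at heq
        set i := (c ^ k) j with hi
        have hiI : o ≤ (i : ℕ) ∧ (i : ℕ) < o + p := by
          rw [hi, stmt9_pow_in hp0 hc k hjI]
          have := Nat.mod_lt ((j : ℕ) - o + k) hp0
          omega
        have hxij : (x i : Fin m) = j := heq
        have hxiI : o ≤ ((x i : Fin m) : ℕ) ∧ ((x i : Fin m) : ℕ) < o + p := by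
          rw [hxij]; exact hjI
        have hiD : i ∈ D :=
          Finset.mem_filter.mpr ⟨Finset.mem_filter.mpr ⟨Finset.mem_univ _, hiI⟩, hxiI⟩
        have hk2 : (c ^ ((((i : ℕ) - o) + (p - (((x i : Fin m) : ℕ) - o))) % p)) (x i) = i :=
          stmt9_kappa hp0 hc hiI hxiI
        have hck : (c ^ k) (x i) = i := by rw [hxij, ← hi]
        have hkeq : k = (((i : ℕ) - o) + (p - (((x i : Fin m) : ℕ) - o))) % p :=
          stmt9_k_unique hp0 hc hxiI hkp (Nat.mod_lt _ hp0) (by rw [hck, hk2])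
        exact hkK (hkeq ▸ Finset.mem_image_of_mem _ hiD)
      · have hjS : j ∈ x.support := by
          rcases hj with h | h
          · exact absurd (Finset.mem_filter.mp h).2 hjI
          · exact h
        intro heq
        rw [Equiv.Perm.mul_apply, stmt9_pow_fix hc hjI] at heq
        exact Equiv.Perm.mem_support.mp hjS heq
  have hdvd := stmt9_dvd_card_support hp hord
  rw [hsupp] at hdvd
  have hcu : (I ∪ x.support).card + (I ∩ x.support).card = I.card + x.support.card :=
    Finset.card_union_add_card_inter I x.support
  have halow : 1 ≤ (I ∩ x.support).card :=
    Finset.card_pos.mpr ⟨j₀, Finset.mem_inter.mpr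
      ⟨Finset.mem_filter.mpr ⟨Finset.mem_univ _, hj₀I⟩, hj₀S⟩⟩
  have hains : I ∩ x.support ⊆ x.support.erase j₁ := by
    intro i hi
    rw [Finset.mem_erase]
    refine ⟨?_, (Finset.mem_inter.mp hi).2⟩
    rintro rfl
    exact hj₁I (Finset.mem_filter.mp (Finset.mem_inter.mp hi).1).2
  have haup : (I ∩ x.support).card ≤ p - 1 := by
    have h8 := Finset.card_le_card hains
    rwa [Finset.card_erase_of_mem hj₁S, hx2] at h8
  rw [hIcard, hx2] at hcu
  obtain ⟨t, ht⟩ := hdvd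
  rcases Nat.lt_or_ge t 2 with h | h
  · interval_cases t <;> omega
  · have h9 : p * 2 ≤ p * t := Nat.mul_le_mul_left p h
    omega

end Template

/-- Let `p ≥ 3` be prime and `2p ≤ n ≤ 3p - 1`. Let
`P = ⟨(1 2 ... p), (p+1 p+2 ... 2p)⟩ ≤ A_n` (the two generators described 0-indexed below),
and let `x ∈ A_n` be a `p`-cycle with `x ∉ P`. Then the coset `xP` contains an element whose
order is not `p`. -/
theorem stmt9 (p n : ℕ) (hp : p.Prime) (hp3 : 3 ≤ p) (h1 : 2 * p ≤ n) (h2 : n ≤ 3 * p - 1)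
    (c₁ c₂ x : Equiv.Perm (Fin n))
    (hc₁ : ∀ i : Fin n,
      ((c₁ i : Fin n) : ℕ) = if (i : ℕ) < p then ((i : ℕ) + 1) % p else (i : ℕ))
    (hc₂ : ∀ i : Fin n, ((c₂ i : Fin n) : ℕ) =
      if (i : ℕ) < p then (i : ℕ)
      else if (i : ℕ) < 2 * p then p + (((i : ℕ) - p) + 1) % p else (i : ℕ))
    (hx1 : x.IsCycle) (hx2 : x.support.card = p)
    (hxA : x ∈ alternatingGroup (Fin n))
    (hxP : x ∉ Subgroup.closure {c₁, c₂}) :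
    ∃ τ ∈ Subgroup.closure {c₁, c₂}, orderOf (x * τ) ≠ p := by
  have hp0 : 0 < p := hp.pos
  have hc₁' : ∀ j : Fin n, ((c₁ j : Fin n) : ℕ) =
      if 0 ≤ (j : ℕ) ∧ (j : ℕ) < 0 + p then 0 + (((j : ℕ) - 0 + 1) % p) else (j : ℕ) := by
    intro j
    rw [hc₁ j]
    rcases Nat.lt_or_ge (j : ℕ) p with h | h
    · rw [if_pos h, if_pos ⟨Nat.zero_le _, by omega⟩]
      simp
    · rw [if_neg (by omega), if_neg (by omega)]
  have hc₂' : ∀ j : Fin n, ((c₂ j : Fin n) : ℕ) =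
      if p ≤ (j : ℕ) ∧ (j : ℕ) < p + p then p + (((j : ℕ) - p + 1) % p) else (j : ℕ) := by
    intro j
    rw [hc₂ j]
    rcases Nat.lt_or_ge (j : ℕ) p with h | h
    · rw [if_pos h, if_neg (by omega)]
    · rcases Nat.lt_or_ge (j : ℕ) (2 * p) with h2' | h2'
      · rw [if_neg (by omega), if_pos h2', if_pos ⟨h, by omega⟩]
      · rw [if_neg (by omega), if_neg (by omega), if_neg (by omega)]
  have hSne : x.support.Nonempty := Finset.card_pos.mp (by rw [hx2]; omega)
  have hmem₁ : c₁ ∈ Subgroup.closure {c₁, c₂} := Subgroup.subset_closure (by simp)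
  have hmem₂ : c₂ ∈ Subgroup.closure {c₁, c₂} := Subgroup.subset_closure (by simp)
  rcases Classical.em (∀ j ∈ x.support, 0 ≤ (j : ℕ) ∧ (j : ℕ) < 0 + p) with hA | hA
  · obtain ⟨k, hk⟩ := stmt9_lemA hp (by omega) hc₁' hA hSne
    exact ⟨c₁ ^ k, Subgroup.pow_mem _ hmem₁ k, hk⟩
  rcases Classical.em (∀ j ∈ x.support, p ≤ (j : ℕ) ∧ (j : ℕ) < p + p) with hB | hB
  · obtain ⟨k, hk⟩ := stmt9_lemA hp (by omega) hc₂' hB hSne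
    exact ⟨c₂ ^ k, Subgroup.pow_mem _ hmem₂ k, hk⟩
  push_neg at hA hB
  obtain ⟨jA, hjAS, hjA⟩ := hA
  obtain ⟨jB, hjBS, hjB⟩ := hB
  have hnsubA : ∃ j ∈ x.support, ¬(0 ≤ (j : ℕ) ∧ (j : ℕ) < 0 + p) := by
    refine ⟨jA, hjAS, fun hcon => ?_⟩
    have := hjA hcon.1
    omega
  have hnsubB : ∃ j ∈ x.support, ¬(p ≤ (j : ℕ) ∧ (j : ℕ) < p + p) := by
    refine ⟨jB, hjBS, fun hcon => ?_⟩
    have := hjB hcon.1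
    omega
  rcases Classical.em (∃ j ∈ x.support, (j : ℕ) < p) with h₁ | h₁
  · obtain ⟨j, hjS, hjp⟩ := h₁
    obtain ⟨k, hk⟩ := stmt9_lemB hp (by omega) hc₁' hx1 hx2
      ⟨j, hjS, Nat.zero_le _, by omega⟩ hnsubA
    exact ⟨c₁ ^ k, Subgroup.pow_mem _ hmem₁ k, hk⟩
  rcases Classical.em (∃ j ∈ x.support, p ≤ (j : ℕ) ∧ (j : ℕ) < p + p) with h₂ | h₂
  · obtain ⟨k, hk⟩ := stmt9_lemB hp (by omega) hc₂' hx1 hx2 h₂ hnsubB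
    exact ⟨c₂ ^ k, Subgroup.pow_mem _ hmem₂ k, hk⟩
  exfalso
  push_neg at h₁ h₂
  have hsub : x.support ⊆ Finset.univ.filter
      (fun j : Fin n => 2 * p ≤ (j : ℕ) ∧ (j : ℕ) < 2 * p + (n - 2 * p)) := by
    intro j hj
    refine Finset.mem_filter.mpr ⟨Finset.mem_univ _, ?_, ?_⟩
    · have ha := h₁ j hj
      have hb := h₂ j hj ha
      omega
    · have := j.isLt
      omega
  have hcard := Finset.card_le_card hsub
  rw [stmt9_card_I (by omega), hx2] at hcard
  omega
end

section
/- Let p ≥ 3 be prime and let P = ⟨(1 2 ... p), (p+1 p+2 ... 2p)⟩ be a Sylow p-subgroup of A_{2p}. Then every nontrivial coset xP (x ∉ P) of P in A_{2p} contains an element whose order is not equal to p. -/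
open Equiv Finset

lemma aux_pow₁ (p : ℕ) (hp3 : 3 ≤ p) (c₁ : Equiv.Perm (Fin (2 * p)))
    (hc₁ : ∀ i : Fin (2 * p),
      ((c₁ i : Fin (2 * p)) : ℕ) = if (i : ℕ) < p then ((i : ℕ) + 1) % p else (i : ℕ))
    (a : ℕ) (i : Fin (2 * p)) :
    ((c₁ ^ a) i : ℕ) = if (i : ℕ) < p then ((i : ℕ) + a) % p else (i : ℕ) := by
  induction a with
  | zero =>
      simp only [pow_zero, Perm.one_apply, Nat.add_zero]
      split
      · exact (Nat.mod_eq_of_lt (by assumption)).symm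
      · rfl
  | succ a ih =>
      rw [pow_succ', Perm.mul_apply, hc₁ ((c₁ ^ a) i), ih]
      by_cases h : (i : ℕ) < p
      · rw [if_pos h, if_pos h, if_pos (Nat.mod_lt _ (by omega)), Nat.mod_add_mod,
          Nat.add_assoc]
      · rw [if_neg h, if_neg h, if_neg h]

lemma aux_pow₂ (p : ℕ) (hp3 : 3 ≤ p) (c₂ : Equiv.Perm (Fin (2 * p)))
    (hc₂ : ∀ i : Fin (2 * p), ((c₂ i : Fin (2 * p)) : ℕ) =
      if (i : ℕ) < p then (i : ℕ) else p + (((i : ℕ) - p) + 1) % p)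
    (b : ℕ) (i : Fin (2 * p)) :
    ((c₂ ^ b) i : ℕ) = if (i : ℕ) < p then (i : ℕ) else p + (((i : ℕ) - p + b) % p) := by
  induction b with
  | zero =>
      simp only [pow_zero, Perm.one_apply, Nat.add_zero]
      split
      · rfl
      · rw [Nat.mod_eq_of_lt (by omega)]; omega
  | succ b ih =>
      rw [pow_succ', Perm.mul_apply, hc₂ ((c₂ ^ b) i), ih]
      by_cases h : (i : ℕ) < p
      · rw [if_pos h, if_pos h, if_pos h]
      · rw [if_neg h, if_neg h, if_neg (by omega : ¬ p + ((i : ℕ) - p + b) % p < p)]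
        congr 1
        rw [Nat.add_sub_cancel_left, Nat.mod_add_mod, Nat.add_assoc]


def A10 (p : ℕ) (x : Equiv.Perm (Fin (2 * p))) (a : ZMod p) : ℕ :=
  (Finset.univ.filter fun i : Fin (2 * p) =>
    (i : ℕ) < p ∧ ((x⁻¹ i : Fin (2 * p)) : ℕ) = ((i : ℕ) + ZMod.val a) % p).card

def B10 (p : ℕ) (x : Equiv.Perm (Fin (2 * p))) (b : ZMod p) : ℕ :=
  (Finset.univ.filter fun i : Fin (2 * p) =>
    p ≤ (i : ℕ) ∧ ((x⁻¹ i : Fin (2 * p)) : ℕ) = p + ((i : ℕ) - p + ZMod.val b) % p).card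

def K1 (p : ℕ) (x : Equiv.Perm (Fin (2 * p))) : ℕ :=
  (Finset.univ.filter fun i : Fin (2 * p) =>
    (i : ℕ) < p ∧ ((x⁻¹ i : Fin (2 * p)) : ℕ) < p).card

def K2 (p : ℕ) (x : Equiv.Perm (Fin (2 * p))) : ℕ :=
  (Finset.univ.filter fun i : Fin (2 * p) =>
    p ≤ (i : ℕ) ∧ p ≤ ((x⁻¹ i : Fin (2 * p)) : ℕ)).card

lemma aux_mod_unique' (p : ℕ) (hp : 0 < p) (m v : ℕ) (hm : m < p) (hv : v < p) (a : ZMod p) :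
    (m + ZMod.val a) % p = v ↔ a = (v : ZMod p) - (m : ZMod p) := by
  haveI : NeZero p := ⟨hp.ne'⟩
  constructor
  · intro h
    have h3 : (((m + ZMod.val a) % p : ℕ) : ZMod p) = ((v : ℕ) : ZMod p) := by rw [h]
    rw [ZMod.natCast_mod] at h3
    push_cast at h3
    rw [ZMod.natCast_val, ZMod.cast_id] at h3
    linear_combination h3
  · intro h
    subst h
    have h1 : ((m : ZMod p) + ((v : ZMod p) - (m : ZMod p))).val
        = (m + ((v : ZMod p) - (m : ZMod p)).val) % p := by
      rw [ZMod.val_add, ZMod.val_cast_of_lt hm]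
    have h2 : (m : ZMod p) + ((v : ZMod p) - (m : ZMod p)) = (v : ZMod p) := by ring
    rw [h2, ZMod.val_cast_of_lt hv] at h1
    exact h1.symm

lemma aux_sumA (p : ℕ) [NeZero p] (hp : 0 < p) (x : Equiv.Perm (Fin (2 * p))) :
    ∑ a : ZMod p, A10 p x a = K1 p x := by
  unfold A10 K1
  simp only [Finset.card_filter]
  rw [Finset.sum_comm]
  apply Finset.sum_congr rfl
  intro i _
  by_cases h1 : (i : ℕ) < p
  · by_cases h2 : ((x⁻¹ i : Fin (2 * p)) : ℕ) < p
    · rw [if_pos ⟨h1, h2⟩]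
      have key : ∀ a : ZMod p,
          ((i : ℕ) < p ∧ ((x⁻¹ i : Fin (2 * p)) : ℕ) = ((i : ℕ) + ZMod.val a) % p)
          ↔ a = (((x⁻¹ i : Fin (2 * p)) : ℕ) : ZMod p) - ((i : ℕ) : ZMod p) := by
        intro a
        rw [← aux_mod_unique' p hp (i : ℕ) _ h1 h2 a]
        constructor
        · exact fun h => h.2.symm
        · exact fun h => ⟨h1, h.symm⟩
      calc (∑ a : ZMod p, if (i : ℕ) < p ∧
              ((x⁻¹ i : Fin (2 * p)) : ℕ) = ((i : ℕ) + ZMod.val a) % p then 1 else 0)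
          = ∑ a : ZMod p, if a = (((x⁻¹ i : Fin (2 * p)) : ℕ) : ZMod p) - ((i : ℕ) : ZMod p)
              then 1 else 0 := by
            apply Finset.sum_congr rfl
            intro a _
            exact if_congr (key a) rfl rfl
        _ = 1 := by rw [Finset.sum_ite_eq' Finset.univ]; simp
    · rw [if_neg (by tauto)]
      apply Finset.sum_eq_zero
      intro a _
      rw [if_neg]
      rintro ⟨-, hv⟩
      exact h2 (by rw [hv]; exact Nat.mod_lt _ hp)
  · rw [if_neg (by tauto)]
    apply Finset.sum_eq_zero
    intro a _
    rw [if_neg]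
    rintro ⟨h, -⟩
    exact h1 h

lemma aux_sumB (p : ℕ) [NeZero p] (hp : 0 < p) (x : Equiv.Perm (Fin (2 * p))) :
    ∑ b : ZMod p, B10 p x b = K2 p x := by
  unfold B10 K2
  simp only [Finset.card_filter]
  rw [Finset.sum_comm]
  apply Finset.sum_congr rfl
  intro i _
  by_cases h1 : p ≤ (i : ℕ)
  · by_cases h2 : p ≤ ((x⁻¹ i : Fin (2 * p)) : ℕ)
    · rw [if_pos ⟨h1, h2⟩]
      have hv2 : ((x⁻¹ i : Fin (2 * p)) : ℕ) - p < p := by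
        have := (x⁻¹ i).isLt; omega
      have hm : (i : ℕ) - p < p := by have := i.isLt; omega
      have key : ∀ b : ZMod p,
          (p ≤ (i : ℕ) ∧ ((x⁻¹ i : Fin (2 * p)) : ℕ) = p + ((i : ℕ) - p + ZMod.val b) % p)
          ↔ b = ((((x⁻¹ i : Fin (2 * p)) : ℕ) - p : ℕ) : ZMod p) - (((i : ℕ) - p : ℕ) : ZMod p) := by
        intro b
        rw [← aux_mod_unique' p hp ((i : ℕ) - p) _ hm hv2 b]
        have hmod : ((i : ℕ) - p + ZMod.val b) % p < p := Nat.mod_lt _ hp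
        constructor
        · rintro ⟨-, h⟩; omega
        · intro h; exact ⟨h1, by omega⟩
      calc (∑ b : ZMod p, if p ≤ (i : ℕ) ∧
              ((x⁻¹ i : Fin (2 * p)) : ℕ) = p + ((i : ℕ) - p + ZMod.val b) % p then 1 else 0)
          = ∑ b : ZMod p, if b = ((((x⁻¹ i : Fin (2 * p)) : ℕ) - p : ℕ) : ZMod p)
              - (((i : ℕ) - p : ℕ) : ZMod p) then 1 else 0 := by
            apply Finset.sum_congr rfl
            intro b _
            exact if_congr (key b) rfl rfl
        _ = 1 := by rw [Finset.sum_ite_eq' Finset.univ]; simp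
    · rw [if_neg (by tauto)]
      apply Finset.sum_eq_zero
      intro b _
      rw [if_neg]
      rintro ⟨-, hv⟩
      exact h2 (by omega)
  · rw [if_neg (by tauto)]
    apply Finset.sum_eq_zero
    intro b _
    rw [if_neg]
    rintro ⟨h, -⟩
    exact h1 h

lemma aux_blk1 (p : ℕ) :
    (Finset.univ.filter fun i : Fin (2 * p) => (i : ℕ) < p).card = p := by
  have hle : p ≤ 2 * p := by omega
  have h : (Finset.univ.filter fun i : Fin (2 * p) => (i : ℕ) < p)
      = Finset.map ⟨fun j : Fin p => Fin.castLE hle j, Fin.castLE_injective _⟩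
        Finset.univ := by
    ext i
    simp only [Finset.mem_filter, Finset.mem_univ, true_and, Finset.mem_map,
      Function.Embedding.coeFn_mk]
    constructor
    · intro h
      exact ⟨⟨(i : ℕ), h⟩, by simp [Fin.castLE, Fin.ext_iff]⟩
    · rintro ⟨j, rfl⟩
      exact j.isLt
  rw [h, Finset.card_map, Finset.card_univ, Fintype.card_fin]

lemma aux_blk2 (p : ℕ) :
    (Finset.univ.filter fun i : Fin (2 * p) => p ≤ (i : ℕ)).card = p := by
  have h := Finset.card_filter_add_card_filter_not
    (s := (Finset.univ : Finset (Fin (2 * p)))) (p := fun i : Fin (2 * p) => (i : ℕ) < p)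
  rw [aux_blk1] at h
  have h2 : (Finset.univ.filter fun i : Fin (2 * p) => ¬ (i : ℕ) < p)
      = (Finset.univ.filter fun i : Fin (2 * p) => p ≤ (i : ℕ)) := by
    apply Finset.filter_congr; intro i _; simp [Nat.not_lt]
  rw [h2] at h
  simp only [Finset.card_univ, Fintype.card_fin] at h
  omega

lemma aux_K1_le (p : ℕ) (x : Equiv.Perm (Fin (2 * p))) : K1 p x ≤ p :=
  le_trans (Finset.card_le_card (Finset.monotone_filter_right _ (fun i _ h => h.1)))
    (le_of_eq (aux_blk1 p))

lemma aux_K2_le (p : ℕ) (x : Equiv.Perm (Fin (2 * p))) : K2 p x ≤ p :=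
  le_trans (Finset.card_le_card (Finset.monotone_filter_right _ (fun i _ h => h.1)))
    (le_of_eq (aux_blk2 p))

-- from K1 = p : x⁻¹ maps block1 into block1, hence block2 into block2, hence K2 = p
lemma aux_K1p (p : ℕ) (x : Equiv.Perm (Fin (2 * p))) (h : K1 p x = p) : K2 p x = p := by
  have hsub : (Finset.univ.filter fun i : Fin (2 * p) =>
      (i : ℕ) < p ∧ ((x⁻¹ i : Fin (2 * p)) : ℕ) < p)
      ⊆ (Finset.univ.filter fun i : Fin (2 * p) => (i : ℕ) < p) :=
    Finset.monotone_filter_right _ (fun i _ h => h.1)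
  have heq := Finset.eq_of_subset_of_card_le hsub (by rw [aux_blk1]; exact le_of_eq h.symm)
  have h1 : ∀ i : Fin (2 * p), (i : ℕ) < p → ((x⁻¹ i : Fin (2 * p)) : ℕ) < p := by
    intro i hi
    have : i ∈ Finset.univ.filter fun i : Fin (2 * p) => (i : ℕ) < p := by
      simp [hi]
    rw [← heq] at this
    exact (Finset.mem_filter.mp this).2.2
  -- image argument
  set S₁ := Finset.univ.filter fun i : Fin (2 * p) => (i : ℕ) < p with hS₁
  have himg : S₁.image (fun i => x⁻¹ i) = S₁ := by
    apply Finset.eq_of_subset_of_card_le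
    · intro j hj
      rw [Finset.mem_image] at hj
      obtain ⟨i, hi, rfl⟩ := hj
      rw [hS₁, Finset.mem_filter] at hi ⊢
      exact ⟨Finset.mem_univ _, h1 i hi.2⟩
    · rw [Finset.card_image_of_injective _ (x⁻¹ : Equiv.Perm (Fin (2 * p))).injective]
  have h2 : ∀ i : Fin (2 * p), p ≤ (i : ℕ) → p ≤ ((x⁻¹ i : Fin (2 * p)) : ℕ) := by
    intro i hi
    by_contra hlt
    push_neg at hlt
    have hmem : x⁻¹ i ∈ S₁ := by rw [hS₁, Finset.mem_filter]; exact ⟨Finset.mem_univ _, hlt⟩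
    rw [← himg, Finset.mem_image] at hmem
    obtain ⟨j, hj, hji⟩ := hmem
    have : j = i := (x⁻¹ : Equiv.Perm (Fin (2 * p))).injective hji
    subst this
    rw [hS₁, Finset.mem_filter] at hj
    omega
  unfold K2
  have hfe : (Finset.univ.filter fun i : Fin (2 * p) =>
      p ≤ (i : ℕ) ∧ p ≤ ((x⁻¹ i : Fin (2 * p)) : ℕ))
      = Finset.univ.filter fun i : Fin (2 * p) => p ≤ (i : ℕ) := by
    apply Finset.filter_congr
    intro i _
    exact ⟨fun h => h.1, fun hi => ⟨hi, h2 i hi⟩⟩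
  rw [hfe]
  exact aux_blk2 p

lemma aux_K2p (p : ℕ) (x : Equiv.Perm (Fin (2 * p))) (h : K2 p x = p) : K1 p x = p := by
  have hsub : (Finset.univ.filter fun i : Fin (2 * p) =>
      p ≤ (i : ℕ) ∧ p ≤ ((x⁻¹ i : Fin (2 * p)) : ℕ))
      ⊆ (Finset.univ.filter fun i : Fin (2 * p) => p ≤ (i : ℕ)) :=
    Finset.monotone_filter_right _ (fun i _ h => h.1)
  have heq := Finset.eq_of_subset_of_card_le hsub (by rw [aux_blk2]; exact le_of_eq h.symm)
  have h1 : ∀ i : Fin (2 * p), p ≤ (i : ℕ) → p ≤ ((x⁻¹ i : Fin (2 * p)) : ℕ) := by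
    intro i hi
    have : i ∈ Finset.univ.filter fun i : Fin (2 * p) => p ≤ (i : ℕ) := by
      simp [hi]
    rw [← heq] at this
    exact (Finset.mem_filter.mp this).2.2
  set S₂ := Finset.univ.filter fun i : Fin (2 * p) => p ≤ (i : ℕ) with hS₂
  have himg : S₂.image (fun i => x⁻¹ i) = S₂ := by
    apply Finset.eq_of_subset_of_card_le
    · intro j hj
      rw [Finset.mem_image] at hj
      obtain ⟨i, hi, rfl⟩ := hj
      rw [hS₂, Finset.mem_filter] at hi ⊢
      exact ⟨Finset.mem_univ _, h1 i hi.2⟩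
    · rw [Finset.card_image_of_injective _ (x⁻¹ : Equiv.Perm (Fin (2 * p))).injective]
  have h2 : ∀ i : Fin (2 * p), (i : ℕ) < p → ((x⁻¹ i : Fin (2 * p)) : ℕ) < p := by
    intro i hi
    by_contra hlt
    push_neg at hlt
    have hmem : x⁻¹ i ∈ S₂ := by rw [hS₂, Finset.mem_filter]; exact ⟨Finset.mem_univ _, hlt⟩
    rw [← himg, Finset.mem_image] at hmem
    obtain ⟨j, hj, hji⟩ := hmem
    have : j = i := (x⁻¹ : Equiv.Perm (Fin (2 * p))).injective hji
    subst this
    rw [hS₂, Finset.mem_filter] at hj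
    omega
  unfold K1
  have hfe : (Finset.univ.filter fun i : Fin (2 * p) =>
      (i : ℕ) < p ∧ ((x⁻¹ i : Fin (2 * p)) : ℕ) < p)
      = Finset.univ.filter fun i : Fin (2 * p) => (i : ℕ) < p := by
    apply Finset.filter_congr
    intro i _
    exact ⟨fun h => h.1, fun hi => ⟨hi, h2 i hi⟩⟩
  rw [hfe]
  exact aux_blk1 p


lemma aux_fix (p : ℕ) (hp : p.Prime) (hp3 : 3 ≤ p) (g : Equiv.Perm (Fin (2 * p)))
    (hg : orderOf g = p) :
    (Finset.univ.filter fun i : Fin (2 * p) => g i = i).card = 0 ∨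
    (Finset.univ.filter fun i : Fin (2 * p) => g i = i).card = p := by
  have hall : ∀ r ∈ g.cycleType, r = p := by
    intro r hr
    have h1 : r ∣ p := by
      rw [← hg, ← Equiv.Perm.lcm_cycleType]; exact Multiset.dvd_lcm hr
    have h2 := Equiv.Perm.two_le_of_mem_cycleType hr
    rcases (Nat.Prime.eq_one_or_self_of_dvd hp r h1) with h | h <;> omega
  have hrep : g.cycleType = Multiset.replicate (Multiset.card g.cycleType) p :=
    Multiset.eq_replicate_of_mem hall
  have hsum : g.support.card = Multiset.card g.cycleType * p := by
    rw [← Equiv.Perm.sum_cycleType, hrep, Multiset.sum_replicate, smul_eq_mul,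
      Multiset.card_replicate]
  have hle : g.support.card ≤ 2 * p := by
    have := Finset.card_le_card (Finset.subset_univ g.support)
    simpa using this
  have hne : Multiset.card g.cycleType ≠ 0 := by
    intro h0
    rw [Multiset.card_eq_zero] at h0
    have : orderOf g = 1 := by rw [← Equiv.Perm.lcm_cycleType, h0]; simp
    omega
  have hm : Multiset.card g.cycleType = 1 ∨ Multiset.card g.cycleType = 2 := by
    by_contra hc
    push_neg at hc
    have : 3 ≤ Multiset.card g.cycleType := by omega
    have := Nat.mul_le_mul_right p this
    omega
  have hcompl : (Finset.univ.filter fun i : Fin (2 * p) => g i = i).card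
      = 2 * p - g.support.card := by
    have : (Finset.univ.filter fun i : Fin (2 * p) => g i = i) = g.supportᶜ := by
      ext i
      simp [Equiv.Perm.mem_support]
    rw [this, Finset.card_compl]
    simp
  rcases hm with h | h
  · right; rw [hcompl, hsum, h]; omega
  · left; rw [hcompl, hsum, h]; omega

lemma aux_fixEq (p : ℕ) [NeZero p] (hp3 : 3 ≤ p)
    (c₁ c₂ : Equiv.Perm (Fin (2 * p)))
    (hc₁ : ∀ i : Fin (2 * p),
      ((c₁ i : Fin (2 * p)) : ℕ) = if (i : ℕ) < p then ((i : ℕ) + 1) % p else (i : ℕ))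
    (hc₂ : ∀ i : Fin (2 * p), ((c₂ i : Fin (2 * p)) : ℕ) =
      if (i : ℕ) < p then (i : ℕ) else p + (((i : ℕ) - p) + 1) % p)
    (x : Equiv.Perm (Fin (2 * p))) (a b : ZMod p) :
    (Finset.univ.filter fun i : Fin (2 * p) =>
      (x * (c₁ ^ ZMod.val a * c₂ ^ ZMod.val b)) i = i).card = A10 p x a + B10 p x b := by
  have hpp : 0 < p := by omega
  set τ := c₁ ^ ZMod.val a * c₂ ^ ZMod.val b with hτdef
  have hτ : ∀ i : Fin (2 * p), ((τ i : Fin (2 * p)) : ℕ) =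
      if (i : ℕ) < p then ((i : ℕ) + ZMod.val a) % p
      else p + ((i : ℕ) - p + ZMod.val b) % p := by
    intro i
    rw [hτdef, Perm.mul_apply, aux_pow₁ p hp3 c₁ hc₁]
    by_cases h : (i : ℕ) < p
    · have h2 : ((c₂ ^ ZMod.val b) i : ℕ) = (i : ℕ) := by
        rw [aux_pow₂ p hp3 c₂ hc₂, if_pos h]
      rw [h2, if_pos h, if_pos h]
    · have h2 : ((c₂ ^ ZMod.val b) i : ℕ) = p + ((i : ℕ) - p + ZMod.val b) % p := by
        rw [aux_pow₂ p hp3 c₂ hc₂, if_neg h]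
      rw [h2, if_neg (by omega), if_neg h]
  unfold A10 B10
  simp only [Finset.card_filter]
  rw [← Finset.sum_add_distrib]
  apply Finset.sum_congr rfl
  intro i _
  have hfix : (x * τ) i = i ↔ ((τ i : Fin (2 * p)) : ℕ) = ((x⁻¹ i : Fin (2 * p)) : ℕ) := by
    have e1 : (x * τ) i = i ↔ τ i = x⁻¹ i := by
      rw [Perm.mul_apply]
      exact (Equiv.Perm.eq_inv_iff_eq).symm
    exact e1.trans Fin.ext_iff
  by_cases h : (i : ℕ) < p
  · rw [if_neg (by omega : ¬ (p ≤ (i : ℕ) ∧ ((x⁻¹ i : Fin (2 * p)) : ℕ)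
      = p + ((i : ℕ) - p + ZMod.val b) % p)), add_zero]
    refine if_congr ?_ rfl rfl
    rw [hfix, hτ i, if_pos h]
    exact ⟨fun hh => ⟨h, hh.symm⟩, fun hh => hh.2.symm⟩
  · rw [if_neg (by omega : ¬ ((i : ℕ) < p ∧ ((x⁻¹ i : Fin (2 * p)) : ℕ)
      = ((i : ℕ) + ZMod.val a) % p)), zero_add]
    refine if_congr ?_ rfl rfl
    rw [hfix, hτ i, if_neg h]
    exact ⟨fun hh => ⟨by omega, hh.symm⟩, fun hh => hh.2.symm⟩
/-- Let `p ≥ 3` be prime and let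
`P = ⟨(1 2 ... p), (p+1 p+2 ... 2p)⟩` be the Sylow `p`-subgroup of `A_{2p}` generated by the two
standard disjoint `p`-cycles (0-indexed below). Then every nontrivial coset `xP` (`x ∈ A_{2p}`,
`x ∉ P`) contains an element whose order is not `p`. -/
theorem stmt10 (p : ℕ) (hp : p.Prime) (hp3 : 3 ≤ p)
    (c₁ c₂ : Equiv.Perm (Fin (2 * p)))
    (hc₁ : ∀ i : Fin (2 * p),
      ((c₁ i : Fin (2 * p)) : ℕ) = if (i : ℕ) < p then ((i : ℕ) + 1) % p else (i : ℕ))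
    (hc₂ : ∀ i : Fin (2 * p), ((c₂ i : Fin (2 * p)) : ℕ) =
      if (i : ℕ) < p then (i : ℕ) else p + (((i : ℕ) - p) + 1) % p) :
    ∀ x : Equiv.Perm (Fin (2 * p)), x ∈ alternatingGroup (Fin (2 * p)) →
      x ∉ Subgroup.closure {c₁, c₂} →
      ∃ τ ∈ Subgroup.closure {c₁, c₂}, orderOf (x * τ) ≠ p := by
  intro x hxA hxP
  haveI : NeZero p := ⟨by omega⟩
  have hpp : 0 < p := by omega
  by_cases hswap : K1 p x = 0 ∧ K2 p x = 0
  · -- x interchanges the two blocks, so x itself has order ≠ p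
    refine ⟨1, one_mem _, ?_⟩
    rw [mul_one]
    intro hord
    have hswap1 := hswap.1
    have hswap2 := hswap.2
    unfold K1 at hswap1
    unfold K2 at hswap2
    have h1 : ∀ i : Fin (2 * p), (i : ℕ) < p → p ≤ ((x⁻¹ i : Fin (2 * p)) : ℕ) := by
      intro i hi
      by_contra hlt
      push_neg at hlt
      have hmem : i ∈ Finset.univ.filter fun i : Fin (2 * p) =>
          (i : ℕ) < p ∧ ((x⁻¹ i : Fin (2 * p)) : ℕ) < p := by simp [hi]; exact hlt
      rw [Finset.card_eq_zero.mp hswap1] at hmem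
      exact absurd hmem (Finset.notMem_empty i)
    have h2 : ∀ i : Fin (2 * p), p ≤ (i : ℕ) → ((x⁻¹ i : Fin (2 * p)) : ℕ) < p := by
      intro i hi
      by_contra hge
      push_neg at hge
      have hmem : i ∈ Finset.univ.filter fun i : Fin (2 * p) =>
          p ≤ (i : ℕ) ∧ p ≤ ((x⁻¹ i : Fin (2 * p)) : ℕ) := by simp [hi]; exact hge
      rw [Finset.card_eq_zero.mp hswap2] at hmem
      exact absurd hmem (Finset.notMem_empty i)
    have hx1 : ∀ i : Fin (2 * p), (i : ℕ) < p → p ≤ ((x i : Fin (2 * p)) : ℕ) := by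
      intro i hi
      by_contra hlt
      push_neg at hlt
      have := h1 (x i) hlt
      rw [show x⁻¹ (x i) = i from x.symm_apply_apply i] at this
      omega
    have hx2 : ∀ i : Fin (2 * p), p ≤ (i : ℕ) → ((x i : Fin (2 * p)) : ℕ) < p := by
      intro i hi
      by_contra hge
      push_neg at hge
      have := h2 (x i) hge
      rw [show x⁻¹ (x i) = i from x.symm_apply_apply i] at this
      omega
    have claim : ∀ m : ℕ, (((x ^ (2 * m)) (⟨0, by omega⟩ : Fin (2 * p))) : ℕ) < p := by
      intro m
      induction m with
      | zero =>
        simp only [Nat.mul_zero, pow_zero, Perm.one_apply]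
        exact hpp
      | succ m ih =>
        have hsplit : x ^ (2 * (m + 1)) = x ^ 2 * x ^ (2 * m) := by
          rw [← pow_add]
          congr 1
          ring
        rw [hsplit, Perm.mul_apply, sq, Perm.mul_apply]
        exact hx2 _ (hx1 _ ih)
    have hodd : p % 2 = 1 := Nat.odd_iff.mp (hp.odd_of_ne_two (by omega))
    have h2m := claim ((p + 1) / 2)
    rw [show 2 * ((p + 1) / 2) = p + 1 from by omega] at h2m
    have hxp : x ^ p = 1 := by
      have h' := pow_orderOf_eq_one x
      rw [hord] at h'
      exact h'
    rw [pow_succ, hxp, one_mul] at h2m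
    have := hx1 ⟨0, by omega⟩ hpp
    omega
  · by_contra hno
    push_neg at hno
    have hmemc₁ : c₁ ∈ Subgroup.closure {c₁, c₂} :=
      Subgroup.subset_closure (Set.mem_insert _ _)
    have hmemc₂ : c₂ ∈ Subgroup.closure {c₁, c₂} :=
      Subgroup.subset_closure (Set.mem_insert_of_mem _ rfl)
    have key : ∀ a b : ZMod p,
        A10 p x a + B10 p x b = 0 ∨ A10 p x a + B10 p x b = p := by
      intro a b
      have hmem : c₁ ^ ZMod.val a * c₂ ^ ZMod.val b ∈ Subgroup.closure {c₁, c₂} :=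
        mul_mem (pow_mem hmemc₁ _) (pow_mem hmemc₂ _)
      have hord := hno _ hmem
      have hfix := aux_fix p hp hp3 _ hord
      rwa [aux_fixEq p hp3 c₁ c₂ hc₁ hc₂ x a b] at hfix
    have hAle : ∀ a : ZMod p, A10 p x a ≤ K1 p x := by
      intro a
      rw [← aux_sumA p hpp x]
      exact Finset.single_le_sum (fun _ _ => Nat.zero_le _) (Finset.mem_univ a)
    have hBle : ∀ b : ZMod p, B10 p x b ≤ K2 p x := by
      intro b
      rw [← aux_sumB p hpp x]
      exact Finset.single_le_sum (fun _ _ => Nat.zero_le _) (Finset.mem_univ b)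
    have hK1le := aux_K1_le p x
    have hK2le := aux_K2_le p x
    by_cases hA : ∃ a : ZMod p, 0 < A10 p x a ∧ A10 p x a < p
    · obtain ⟨a₀, ha₀⟩ := hA
      have hBall : ∀ b : ZMod p, B10 p x b = p - A10 p x a₀ := by
        intro b
        rcases key a₀ b with h | h <;> omega
      have hAall : ∀ a : ZMod p, A10 p x a = A10 p x a₀ := by
        intro a
        have hb := hBall 0
        rcases key a 0 with h | h <;> omega
      have hsA : K1 p x = p * A10 p x a₀ := by
        rw [← aux_sumA p hpp x, Finset.sum_congr rfl (fun a _ => hAall a),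
          Finset.sum_const, Finset.card_univ, ZMod.card, smul_eq_mul]
      have hA1 : A10 p x a₀ = 1 := by
        by_contra hne
        have h2' : 2 ≤ A10 p x a₀ := by omega
        have := Nat.mul_le_mul (Nat.le_refl p) h2'
        omega
      have hsB : K2 p x = p * (p - 1) := by
        rw [← aux_sumB p hpp x, Finset.sum_congr rfl (fun b _ => hBall b),
          Finset.sum_const, Finset.card_univ, ZMod.card, smul_eq_mul, hA1]
      have := Nat.mul_le_mul (Nat.le_refl p) (show 2 ≤ p - 1 by omega)
      omega
    · push_neg at hA
      by_cases hB : ∃ b : ZMod p, 0 < B10 p x b ∧ B10 p x b < p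
      · obtain ⟨b₀, hb₀⟩ := hB
        rcases key 0 b₀ with h | h
        · omega
        · by_cases h0 : A10 p x 0 = 0
          · omega
          · have := hA 0 (by omega)
            omega
      · push_neg at hB
        by_cases hK1 : K1 p x = 0
        · by_cases hK2 : K2 p x = 0
          · exact hswap ⟨hK1, hK2⟩
          · have hex : ∃ b : ZMod p, B10 p x b ≠ 0 := by
              by_contra hall
              push_neg at hall
              exact hK2 (by rw [← aux_sumB p hpp x]
                            exact Finset.sum_eq_zero fun b _ => hall b)
            obtain ⟨b, hb⟩ := hex
            have hbp := hB b (by omega)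
            have hble := hBle b
            have hK2p : K2 p x = p := by omega
            have := aux_K2p p x hK2p
            omega
        · have hex : ∃ a : ZMod p, A10 p x a ≠ 0 := by
            by_contra hall
            push_neg at hall
            exact hK1 (by rw [← aux_sumA p hpp x]
                          exact Finset.sum_eq_zero fun a _ => hall a)
          obtain ⟨a, ha⟩ := hex
          have hap := hA a (by omega)
          have hale := hAle a
          have hK1p : K1 p x = p := by omega
          have hK2p := aux_K1p p x hK1p
          have hexb : ∃ b : ZMod p, B10 p x b ≠ 0 := by
            by_contra hall
            push_neg at hall
            have : K2 p x = 0 := by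
              rw [← aux_sumB p hpp x]
              exact Finset.sum_eq_zero fun b _ => hall b
            omega
          obtain ⟨b, hb⟩ := hexb
          have hbp := hB b (by omega)
          have hble := hBle b
          rcases key a b with h | h <;> omega
end

section
/- Let G be a finite group, p a prime, and P a Sylow p-subgroup of G. Suppose G is a group of minimal order among finite groups possessing a nontrivial coset gP (g ∉ P) all of whose elements have order a power of p. Then G is a non-abelian simple group. -/
open Subgroup Pointwise

/-- If `N` is normal, `P ⊓ N` (viewed inside `N`) is a Sylow `p`-subgroup of `N`. -/
lemma sylow_subgroupOf_normal' {p : ℕ} [Fact p.Prime] {G : Type} [Group G] [Finite G]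
    (P : Sylow p G) (N : Subgroup G) [N.Normal] :
    ∃ Q : Sylow p N, (Q : Subgroup N) = (P : Subgroup G).subgroupOf N := by
  have hpg : IsPGroup p ((P : Subgroup G).subgroupOf N) := by
    have h1 : IsPGroup p ((P : Subgroup G) ⊓ N : Subgroup G) := P.2.to_inf_left
    have h2 : ((P : Subgroup G) ⊓ N).subgroupOf N = (P : Subgroup G).subgroupOf N :=
      inf_subgroupOf_right _ _
    have h3 := h1.of_equiv (subgroupOfEquivOfLe (inf_le_right :
      (P : Subgroup G) ⊓ N ≤ N)).symm
    rwa [h2] at h3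
  refine ⟨⟨(P : Subgroup G).subgroupOf N, hpg, ?_⟩, rfl⟩
  intro R hR hle
  have hR' : IsPGroup p (R.map N.subtype) := hR.map _
  obtain ⟨P₂, hRP₂⟩ := hR'.exists_le_sylow
  obtain ⟨x, hx⟩ := MulAction.exists_smul_eq G P P₂
  have hP₂ : (P₂ : Subgroup G) = MulAut.conj x • (P : Subgroup G) := by
    rw [← hx, Sylow.smul_def, Sylow.pointwise_smul_def]
  have hsub : R.map N.subtype ≤ MulAut.conj x • ((P : Subgroup G) ⊓ N) := by
    rw [smul_inf, Normal.conj_smul_eq_self x N]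
    exact le_inf (hP₂ ▸ hRP₂) (map_subtype_le R)
  have hge : (P : Subgroup G) ⊓ N ≤ R.map N.subtype := by
    rw [← subgroupOf_map_subtype]
    exact map_mono hle
  have hcard : Nat.card (R.map N.subtype) ≤ Nat.card ((P : Subgroup G) ⊓ N : Subgroup G) := by
    calc Nat.card (R.map N.subtype)
        ≤ Nat.card (MulAut.conj x • ((P : Subgroup G) ⊓ N) : Subgroup G) :=
          Subgroup.card_le_of_le hsub
      _ = Nat.card ((P : Subgroup G) ⊓ N : Subgroup G) :=
          (Nat.card_congr (equivSMul (MulAut.conj x) _).toEquiv).symm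
  have heq : (P : Subgroup G) ⊓ N = R.map N.subtype :=
    Subgroup.eq_of_le_of_card_ge hge hcard
  apply Subgroup.map_injective (N.subtype_injective)
  rw [← heq, subgroupOf_map_subtype]

/-- A proper subgroup of a finite group has strictly smaller cardinality. -/
lemma card_lt_of_ne_top' {G : Type} [Group G] [Fintype G] {H : Subgroup G} (h : H ≠ ⊤) :
    Nat.card H < Nat.card G := by
  refine lt_of_le_of_ne (Nat.le_of_dvd Nat.card_pos H.card_subgroup_dvd_card) ?_
  exact fun hc => h (Subgroup.eq_top_of_card_eq H hc)

/-- Let `G` be a finite group, `p` a prime, and `P` a Sylow `p`-subgroup of `G`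
admitting a nontrivial coset `gP` (`g ∉ P`) all of whose elements have order a power of `p`.
If `G` has minimal order among finite groups (for any prime) with such a coset, then `G` is a
non-abelian simple group. -/
theorem stmt16 (p : ℕ) (hp : p.Prime) (G : Type) [Group G] [Fintype G]
    (P : Sylow p G) (g : G) (hg : g ∉ P)
    (hcoset : ∀ τ ∈ (P : Subgroup G), ∃ k : ℕ, orderOf (g * τ) = p ^ k)
    (hmin : ∀ (G' : Type) [Group G'] [Fintype G'] (p' : ℕ), p'.Prime →
      ∀ (P' : Sylow p' G') (g' : G'), g' ∉ P' →
        (∀ τ ∈ (P' : Subgroup G'), ∃ k : ℕ, orderOf (g' * τ) = p' ^ k) →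
        Fintype.card G ≤ Fintype.card G') :
    IsSimpleGroup G ∧ ∃ a b : G, a * b ≠ b * a := by
  haveI := Fact.mk hp
  have hg1 : g ≠ 1 := fun h => hg (h ▸ (P : Subgroup G).one_mem)
  haveI : Nontrivial G := nontrivial_of_ne g 1 hg1
  -- `g` itself is a `p`-element
  obtain ⟨k₀, hk₀⟩ := hcoset 1 (one_mem _)
  rw [mul_one] at hk₀
  -- non-abelian (indeed: `P` cannot be normal)
  have hPnotnormal : ¬ (P : Subgroup G).Normal := by
    intro hnor
    have hgP : IsPGroup p (Subgroup.zpowers g) :=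
      IsPGroup.of_card (by rw [Nat.card_zpowers, hk₀])
    obtain ⟨Q, hQ⟩ := hgP.exists_le_sylow
    haveI := Sylow.unique_of_normal P hnor
    have hQP : Q = P := Subsingleton.elim Q P
    exact hg (hQP ▸ hQ (Subgroup.mem_zpowers g))
  have hnab : ∃ a b : G, a * b ≠ b * a := by
    by_contra hab
    push_neg at hab
    exact hPnotnormal ⟨fun n hn x => by
      rw [hab x n, mul_inv_cancel_right]; exact hn⟩
  refine ⟨⟨fun N hN => ?_⟩, hnab⟩
  by_contra hcon
  push_neg at hcon
  obtain ⟨hNbot, hNtop⟩ := hcon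
  haveI := hN
  by_cases hgPN : g ∈ (P : Subgroup G) ⊔ N
  · by_cases hT : (P : Subgroup G) ⊔ N = ⊤
    · -- Case C: `P ⊔ N = ⊤`; translate the coset into `N`.
      have hgNP : g ∈ (N : Set G) * ((P : Subgroup G) : Set G) := by
        rw [← Subgroup.normal_mul]
        have : N ⊔ (P : Subgroup G) = ⊤ := by rw [sup_comm]; exact hT
        rw [this]
        trivial
      obtain ⟨n, hn, σ, hσ, hg_eq⟩ := hgNP
      haveI : Fintype N := Fintype.ofFinite _
      obtain ⟨Q, hQ⟩ := sylow_subgroupOf_normal' P N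
      set g' : N := ⟨n, hn⟩ with hg'def
      have hnP : n ∉ (P : Subgroup G) := fun h => hg (hg_eq ▸ mul_mem h hσ)
      have hg' : g' ∉ Q := by
        intro hmem
        have : g' ∈ (P : Subgroup G).subgroupOf N := hQ ▸ hmem
        exact hnP (Subgroup.mem_subgroupOf.mp this)
      have hco : ∀ τ ∈ (Q : Subgroup N), ∃ k : ℕ, orderOf (g' * τ) = p ^ k := by
        intro τ hτ
        rw [hQ, Subgroup.mem_subgroupOf] at hτ
        obtain ⟨k, hk⟩ := hcoset (σ⁻¹ * ((τ : N) : G)) (mul_mem (inv_mem hσ) hτ)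
        refine ⟨k, ?_⟩
        rw [← orderOf_injective N.subtype Subtype.coe_injective (g' * τ)]
        have : (N.subtype (g' * τ) : G) = g * (σ⁻¹ * ((τ : N) : G)) := by
          simp [hg'def, ← hg_eq, mul_assoc]
        rw [this, hk]
      have hle := hmin N p hp Q g' hg' hco
      rw [← Nat.card_eq_fintype_card (α := G), ← Nat.card_eq_fintype_card (α := N)] at hle
      have hlt : Nat.card N < Nat.card G := card_lt_of_ne_top' hNtop
      omega
    · -- Case B: `P ⊔ N` is a proper subgroup containing the coset.
      set H := (P : Subgroup G) ⊔ N with hHdef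
      haveI : Fintype H := Fintype.ofFinite _
      have hPH : (P : Subgroup G) ≤ H := le_sup_left
      set P' := P.subtype hPH with hP'def
      set g'' : H := ⟨g, hgPN⟩ with hg''def
      have hg' : g'' ∉ P' := by
        intro hmem
        have : g'' ∈ (P : Subgroup G).subgroupOf H := by
          rw [← P.coe_subtype hPH]; exact hmem
        exact hg (Subgroup.mem_subgroupOf.mp this)
      have hco : ∀ τ ∈ (P' : Subgroup H), ∃ k : ℕ, orderOf (g'' * τ) = p ^ k := by
        intro τ hτ
        rw [P.coe_subtype, Subgroup.mem_subgroupOf] at hτ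
        obtain ⟨k, hk⟩ := hcoset ((τ : H) : G) hτ
        refine ⟨k, ?_⟩
        rw [← orderOf_injective H.subtype Subtype.coe_injective (g'' * τ)]
        have : (H.subtype (g'' * τ) : G) = g * ((τ : H) : G) := by simp [hg''def]
        rw [this, hk]
      have hle := hmin H p hp P' g'' hg' hco
      rw [← Nat.card_eq_fintype_card (α := G), ← Nat.card_eq_fintype_card (α := H)] at hle
      have hlt : Nat.card H < Nat.card G := card_lt_of_ne_top' hT
      omega
  · -- Case A: pass to the quotient `G ⧸ N`.
    set f := QuotientGroup.mk' N with hfdef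
    have hf : Function.Surjective f := QuotientGroup.mk'_surjective N
    haveI : Fintype (G ⧸ N) := Fintype.ofFinite _
    set P' := P.mapSurjective hf with hP'def
    have hg' : f g ∉ P' := by
      intro hmem
      have hmem' : f g ∈ (P : Subgroup G).map f := by
        rw [← Sylow.coe_mapSurjective hf P]; exact hmem
      obtain ⟨τ, hτ, hfτ⟩ := Subgroup.mem_map.mp hmem'
      obtain ⟨z, hz, hzz⟩ := (QuotientGroup.mk'_eq_mk' N).mp hfτ
      exact hgPN (hzz ▸ mul_mem (Subgroup.mem_sup_left hτ) (Subgroup.mem_sup_right hz))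
    have hco : ∀ τ' ∈ (P' : Subgroup (G ⧸ N)), ∃ k : ℕ, orderOf (f g * τ') = p ^ k := by
      intro τ' hτ'
      have hτ'' : τ' ∈ (P : Subgroup G).map f := by
        rw [← Sylow.coe_mapSurjective hf P]; exact hτ'
      obtain ⟨τ, hτ, rfl⟩ := Subgroup.mem_map.mp hτ''
      obtain ⟨k, hk⟩ := hcoset τ hτ
      have hdvd : orderOf (f g * f τ) ∣ p ^ k := by
        rw [← map_mul, ← hk]; exact orderOf_map_dvd f _
      obtain ⟨j, _, hj⟩ := (Nat.dvd_prime_pow hp).mp hdvd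
      exact ⟨j, hj⟩
    have hle := hmin (G ⧸ N) p hp P' (f g) hg' hco
    rw [← Nat.card_eq_fintype_card (α := G), ← Nat.card_eq_fintype_card (α := G ⧸ N)] at hle
    have hlt : Nat.card (G ⧸ N) < Nat.card G := by
      have hprod := Subgroup.card_eq_card_quotient_mul_card_subgroup N
      haveI : Nontrivial N := (Subgroup.nontrivial_iff_ne_bot N).mpr hNbot
      have h2 : 1 < Nat.card N := Finite.one_lt_card_iff_nontrivial.mpr inferInstance
      have hpos : 0 < Nat.card (G ⧸ N) := Nat.card_pos
      calc Nat.card (G ⧸ N) = Nat.card (G ⧸ N) * 1 := (mul_one _).symm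
        _ < Nat.card (G ⧸ N) * Nat.card N := by
              rw [mul_one]; exact (Nat.lt_mul_iff_one_lt_right hpos).mpr h2
        _ = Nat.card G := hprod.symm
    omega
end

section
/- Let N = 8n with n ≥ 1 and let x = (1 2)···(4n−1 4n), y = (1 4n+1)···(4n 8n) ∈ S_N. Then every element of the coset y·Z_{S_N}(x) of the centralizer of x in the symmetric group S_N has even order. -/
/-- With `N = 8n` (`n ≥ 1`), `x = (1 2)⋯(4n-1 4n)` and `y = (1 4n+1)⋯(4n 8n)`,
every element of the coset `y ⬝ Z_{S_N}(x)` of the centralizer of `x` in the symmetric group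
has even order. -/
theorem stmt19 (n : ℕ) (hn : 1 ≤ n) (x y : Equiv.Perm (Fin (8 * n)))
    (hx : ∀ i : Fin (8 * n), ((x i : Fin (8 * n)) : ℕ) =
      if (i : ℕ) < 4 * n then (if (i : ℕ) % 2 = 0 then (i : ℕ) + 1 else (i : ℕ) - 1)
      else (i : ℕ))
    (hy : ∀ i : Fin (8 * n),
      ((y i : Fin (8 * n)) : ℕ) = if (i : ℕ) < 4 * n then (i : ℕ) + 4 * n else (i : ℕ) - 4 * n) :
    ∀ z : Equiv.Perm (Fin (8 * n)), z * x = x * z → Even (orderOf (y * z)) := by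
  intro z hz
  -- characterization of non-fixed points of x
  have hfix : ∀ i : Fin (8 * n), (i : ℕ) < 4 * n ↔ x i ≠ i := by
    intro i
    have h := hx i
    constructor
    · intro hi hcontra
      rw [hcontra, if_pos hi] at h
      by_cases hpar : (i : ℕ) % 2 = 0
      · rw [if_pos hpar] at h; omega
      · rw [if_neg hpar] at h; omega
    · intro hne
      by_contra hi
      rw [if_neg hi] at h
      exact hne (Fin.ext h)
  -- z preserves the set {i | i < 4n}
  have hPz : ∀ i : Fin (8 * n), ((z i : Fin (8 * n)) : ℕ) < 4 * n ↔ (i : ℕ) < 4 * n := by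
    intro i
    have hcomm : z (x i) = x (z i) := by
      have := congrArg (fun f => f i) hz
      simpa using this
    rw [hfix, hfix, ← hcomm]
    exact z.injective.ne_iff
  -- y flips the set
  have hPy : ∀ i : Fin (8 * n), ((y i : Fin (8 * n)) : ℕ) < 4 * n ↔ ¬ (i : ℕ) < 4 * n := by
    intro i
    have h := hy i
    have hi8 : (i : ℕ) < 8 * n := i.isLt
    by_cases hi : (i : ℕ) < 4 * n
    · rw [if_pos hi] at h; constructor <;> intro <;> omega
    · rw [if_neg hi] at h; constructor <;> intro <;> omega
  set w := y * z with hw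
  have hPw : ∀ i : Fin (8 * n), ((w i : Fin (8 * n)) : ℕ) < 4 * n ↔ ¬ (i : ℕ) < 4 * n := by
    intro i
    have : w i = y (z i) := rfl
    rw [this, hPy, hPz]
  -- iterate
  have hpow : ∀ (k : ℕ) (i : Fin (8 * n)),
      (((w ^ k) i : Fin (8 * n)) : ℕ) < 4 * n ↔ (Even k ↔ (i : ℕ) < 4 * n) := by
    intro k
    induction k with
    | zero => intro i; simp
    | succ k ih =>
      intro i
      have : (w ^ (k + 1)) i = w ((w ^ k) i) := by
        rw [pow_succ' w k]; rfl
      rw [this, hPw, ih i, Nat.even_add_one]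
      tauto
  -- conclude
  have h8 : 0 < 8 * n := by omega
  let i0 : Fin (8 * n) := ⟨0, h8⟩
  have hi0 : (i0 : ℕ) < 4 * n := by simp [i0]; omega
  have hone : (w ^ orderOf w) i0 = i0 := by rw [pow_orderOf_eq_one]; rfl
  have := (hpow (orderOf w) i0).mp (by rw [hone]; exact hi0)
  exact this.mpr hi0
end
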